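/- arXiv:1407.5130 — 5 statements merged into one kernel-verified Lean document; each statement's English description precedes it below -/
import Mathlib

section
/- Let A be an n×n matrix over a commutative ring and let X, Y be subsets of {1,...,n} of the same size k with 1 ≤ k < n. Let S_X^Y be the set of permutations σ of {1,...,n} with σ(X) = Y. Then the restricted determinant sum Δ(X,Y,A) = Σ_{σ ∈ S_X^Y} sgn(σ) ∏_{i=1}^n A(i, σ(i)) equals (-1)^{ΣX} (-1)^{ΣY} det(A[X|Y]) det(A(X|Y)), where ΣX denotes the sum of elements of X. -/
open Finset

variable {n k : ℕ}

lemma card_compl_eq {X : Finset (Fin n)} (hX : X.card = k) : Xᶜ.card = n - k := by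
  simp [Finset.card_compl, hX]

/-- The function that lists `X` first (in order), then `Xᶜ` (in order). -/
def splitFun (X : Finset (Fin n)) (hX : X.card = k) : Fin n → Fin n :=
  fun i => if h : (i : ℕ) < k then X.orderEmbOfFin hX ⟨i, h⟩
    else Xᶜ.orderEmbOfFin (card_compl_eq hX) ⟨(i : ℕ) - k, by have := i.isLt; omega⟩

lemma splitFun_injective (X : Finset (Fin n)) (hX : X.card = k) :
    Function.Injective (splitFun X hX) := by
  intro i j hij
  unfold splitFun at hij
  split_ifs at hij with h1 h2 h2
  · have := (X.orderEmbOfFin hX).injective hij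
    exact Fin.ext (congrArg Fin.val this : _)
  · have h3 : X.orderEmbOfFin hX ⟨i, h1⟩ ∈ X := Finset.orderEmbOfFin_mem _ _ _
    rw [hij] at h3
    have h4 := Finset.orderEmbOfFin_mem Xᶜ (card_compl_eq hX)
      ⟨(j : ℕ) - k, by have := j.isLt; omega⟩
    simp only [Finset.mem_compl] at h4
    exact absurd h3 h4
  · have h3 : X.orderEmbOfFin hX ⟨j, h2⟩ ∈ X := Finset.orderEmbOfFin_mem _ _ _
    rw [← hij] at h3
    have h4 := Finset.orderEmbOfFin_mem Xᶜ (card_compl_eq hX)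
      ⟨(i : ℕ) - k, by have := i.isLt; omega⟩
    simp only [Finset.mem_compl] at h4
    exact absurd h3 h4
  · have := (Xᶜ.orderEmbOfFin (card_compl_eq hX)).injective hij
    have := congrArg Fin.val this
    simp only [Fin.val_mk] at this  -- wrong? mk coe
    have hi := i.isLt; have hj := j.isLt
    exact Fin.ext (by omega)

/-- `splitFun` as a permutation. -/
noncomputable def splitPerm (X : Finset (Fin n)) (hX : X.card = k) : Equiv.Perm (Fin n) :=
  Equiv.ofBijective _ (Finite.injective_iff_bijective.mp (splitFun_injective X hX))

@[simp] lemma splitPerm_apply (X : Finset (Fin n)) (hX : X.card = k) (i : Fin n) :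
    splitPerm X hX i = splitFun X hX i := rfl

section step
variable {x y : Fin n} {X : Finset (Fin n)}

lemma swap_strictMono_up (hxy : (y : ℕ) = (x : ℕ) + 1) {m : ℕ} {f : Fin m → Fin n}
    (hf : StrictMono f) (h : ∀ j, f j ≠ y) :
    StrictMono (fun j => Equiv.swap x y (f j)) := by
  intro a b hab
  have huv : (f a : ℕ) < (f b : ℕ) := hf hab
  have hay : (f a : ℕ) ≠ (y : ℕ) := fun hh => h a (Fin.ext hh)
  have hby : (f b : ℕ) ≠ (y : ℕ) := fun hh => h b (Fin.ext hh)
  simp only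
  rcases eq_or_ne (f a) x with ha | ha
  · have hbx : f b ≠ x := fun hh => by
      rw [ha, hh] at huv; exact lt_irrefl _ huv
    rw [ha, Equiv.swap_apply_left, Equiv.swap_apply_of_ne_of_ne hbx (h b)]
    have hax : (f a : ℕ) = (x : ℕ) := congrArg Fin.val ha
    exact Fin.lt_def.mpr (by omega)
  · rcases eq_or_ne (f b) x with hb | hb
    · rw [hb, Equiv.swap_apply_left, Equiv.swap_apply_of_ne_of_ne ha (h a)]
      have hbx : (f b : ℕ) = (x : ℕ) := congrArg Fin.val hb
      exact Fin.lt_def.mpr (by omega)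
    · rw [Equiv.swap_apply_of_ne_of_ne ha (h a), Equiv.swap_apply_of_ne_of_ne hb (h b)]
      exact hf hab

lemma swap_strictMono_down (hxy : (y : ℕ) = (x : ℕ) + 1) {m : ℕ} {f : Fin m → Fin n}
    (hf : StrictMono f) (h : ∀ j, f j ≠ x) :
    StrictMono (fun j => Equiv.swap x y (f j)) := by
  intro a b hab
  have huv : (f a : ℕ) < (f b : ℕ) := hf hab
  have hax : (f a : ℕ) ≠ (x : ℕ) := fun hh => h a (Fin.ext hh)
  have hbx : (f b : ℕ) ≠ (x : ℕ) := fun hh => h b (Fin.ext hh)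
  simp only
  rcases eq_or_ne (f a) y with ha | ha
  · have hby : f b ≠ y := fun hh => by
      rw [ha, hh] at huv; exact lt_irrefl _ huv
    rw [ha, Equiv.swap_apply_right, Equiv.swap_apply_of_ne_of_ne (h b) hby]
    have hay : (f a : ℕ) = (y : ℕ) := congrArg Fin.val ha
    exact Fin.lt_def.mpr (by omega)
  · rcases eq_or_ne (f b) y with hb | hb
    · rw [hb, Equiv.swap_apply_right, Equiv.swap_apply_of_ne_of_ne (h a) ha]
      have hby : (f b : ℕ) = (y : ℕ) := congrArg Fin.val hb
      exact Fin.lt_def.mpr (by omega)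
    · rw [Equiv.swap_apply_of_ne_of_ne (h a) ha, Equiv.swap_apply_of_ne_of_ne (h b) hb]
      exact hf hab

lemma orderEmbOfFin_swap (hxX : x ∉ X) (hyX : y ∈ X) (hxy : (y : ℕ) = (x : ℕ) + 1)
    (hX : X.card = k) (hX' : (insert x (X.erase y)).card = k) (j : Fin k) :
    X.orderEmbOfFin hX j = Equiv.swap x y ((insert x (X.erase y)).orderEmbOfFin hX' j) := by
  have hxy' : x ≠ y := fun h => by rw [h] at hxy; omega
  have hyX' : y ∉ insert x (X.erase y) := by
    simp only [Finset.mem_insert, Finset.mem_erase]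
    push_neg
    exact ⟨hxy'.symm, fun h => absurd rfl h⟩
  have hmem : ∀ j : Fin k,
      Equiv.swap x y ((insert x (X.erase y)).orderEmbOfFin hX' j) ∈ X := by
    intro j
    have hz := Finset.orderEmbOfFin_mem (insert x (X.erase y)) hX' j
    rcases Finset.mem_insert.mp hz with h | h
    · rw [h, Equiv.swap_apply_left]; exact hyX
    · rw [Equiv.swap_apply_of_ne_of_ne
        (fun hh => hxX (by rw [hh] at h; exact Finset.mem_of_mem_erase h))
        (Finset.ne_of_mem_erase h)]
      exact Finset.mem_of_mem_erase h
  have hne : ∀ j : Fin k, (insert x (X.erase y)).orderEmbOfFin hX' j ≠ y :=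
    fun j hj => hyX' (by
      have m := Finset.orderEmbOfFin_mem (insert x (X.erase y)) hX' j
      rwa [hj] at m)
  have hmono := swap_strictMono_up hxy ((insert x (X.erase y)).orderEmbOfFin hX').strictMono hne
  have := Finset.orderEmbOfFin_unique hX hmem hmono
  exact (congrFun this j).symm

lemma orderEmbOfFin_swap_compl (hxX : x ∉ X) (hyX : y ∈ X) (hxy : (y : ℕ) = (x : ℕ) + 1)
    (hX : X.card = k) (hX' : (insert x (X.erase y)).card = k) (j : Fin (n - k)) :
    Xᶜ.orderEmbOfFin (card_compl_eq hX) j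
      = Equiv.swap x y ((insert x (X.erase y))ᶜ.orderEmbOfFin (card_compl_eq hX') j) := by
  have hxy' : x ≠ y := fun h => by rw [h] at hxy; omega
  have hxX' : x ∉ (insert x (X.erase y))ᶜ := by simp
  have hmem : ∀ j : Fin (n - k),
      Equiv.swap x y ((insert x (X.erase y))ᶜ.orderEmbOfFin (card_compl_eq hX') j) ∈ Xᶜ := by
    intro j
    have hz := Finset.orderEmbOfFin_mem (insert x (X.erase y))ᶜ (card_compl_eq hX') j
    rcases eq_or_ne ((insert x (X.erase y))ᶜ.orderEmbOfFin (card_compl_eq hX') j) y with h | h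
    · rw [h, Equiv.swap_apply_right]; simpa using hxX
    · have hzx : (insert x (X.erase y))ᶜ.orderEmbOfFin (card_compl_eq hX') j ≠ x :=
        fun hh => hxX' (by rwa [hh] at hz)
      rw [Equiv.swap_apply_of_ne_of_ne hzx h]
      simp only [Finset.mem_compl, Finset.mem_insert, Finset.mem_erase] at hz
      push_neg at hz
      exact Finset.mem_compl.mpr (hz.2 h)
  have hne : ∀ j : Fin (n - k),
      (insert x (X.erase y))ᶜ.orderEmbOfFin (card_compl_eq hX') j ≠ x :=
    fun j hj => hxX' (by
      have m := Finset.orderEmbOfFin_mem (insert x (X.erase y))ᶜ (card_compl_eq hX') j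
      rwa [hj] at m)
  have hmono := swap_strictMono_down hxy
    ((insert x (X.erase y))ᶜ.orderEmbOfFin (card_compl_eq hX')).strictMono hne
  have := Finset.orderEmbOfFin_unique (card_compl_eq hX) hmem hmono
  exact (congrFun this j).symm

lemma splitFun_swap (hxX : x ∉ X) (hyX : y ∈ X) (hxy : (y : ℕ) = (x : ℕ) + 1)
    (hX : X.card = k) (hX' : (insert x (X.erase y)).card = k) (i : Fin n) :
    splitFun X hX i = Equiv.swap x y (splitFun (insert x (X.erase y)) hX' i) := by
  unfold splitFun
  split_ifs with h
  · exact orderEmbOfFin_swap hxX hyX hxy hX hX' _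
  · exact orderEmbOfFin_swap_compl hxX hyX hxy hX hX' _

end step

lemma filter_lt_card (m : ℕ) (hm : m ≤ n) :
    ((univ : Finset (Fin n)).filter (fun i : Fin n => (i : ℕ) < m)).card = m := by
  have : (univ : Finset (Fin n)).filter (fun i : Fin n => (i : ℕ) < m)
      = Finset.map (Fin.castLEEmb hm) univ := by
    ext i
    simp only [Finset.mem_filter, Finset.mem_univ, true_and, Finset.mem_map]
    constructor
    · intro hi
      exact ⟨⟨(i : ℕ), hi⟩, Fin.ext rfl⟩
    · rintro ⟨j, -, rfl⟩
      exact j.isLt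
  rw [this, Finset.card_map, Finset.card_univ, Fintype.card_fin]

/-- A downward-closed `k`-set in `Fin n` is the initial segment. -/
lemma eq_initial (X : Finset (Fin n)) (hX : X.card = k) (hkn : k ≤ n)
    (hcl : ∀ y ∈ X, ∀ z : Fin n, (z : ℕ) ≤ (y : ℕ) → z ∈ X) :
    X = (univ : Finset (Fin n)).filter (fun i : Fin n => (i : ℕ) < k) := by
  have hsub : X ⊆ (univ : Finset (Fin n)).filter (fun i : Fin n => (i : ℕ) < k) := by
    intro y hy
    simp only [Finset.mem_filter, Finset.mem_univ, true_and]
    by_contra hyk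
    push_neg at hyk
    have hsub2 : (univ : Finset (Fin n)).filter (fun i : Fin n => (i : ℕ) < (y : ℕ) + 1) ⊆ X := by
      intro z hz
      simp only [Finset.mem_filter, Finset.mem_univ, true_and] at hz
      exact hcl y hy z (by omega)
    have := Finset.card_le_card hsub2
    rw [filter_lt_card _ (by have := y.isLt; omega), hX] at this
    omega
  exact Finset.eq_of_subset_of_card_le hsub
    (by rw [filter_lt_card k hkn, hX])

lemma splitFun_initial (hkn : k ≤ n)
    (hX : ((univ : Finset (Fin n)).filter (fun i : Fin n => (i : ℕ) < k)).card = k) (i : Fin n) :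
    splitFun ((univ : Finset (Fin n)).filter (fun i : Fin n => (i : ℕ) < k)) hX i = i := by
  set X := (univ : Finset (Fin n)).filter (fun i : Fin n => (i : ℕ) < k) with hXdef
  have h1 : ∀ j : Fin k, X.orderEmbOfFin hX j = ⟨(j : ℕ), by have := j.isLt; omega⟩ := by
    have hmem : ∀ j : Fin k, (⟨(j : ℕ), by have := j.isLt; omega⟩ : Fin n) ∈ X := by
      intro j
      simp only [hXdef, Finset.mem_filter, Finset.mem_univ, true_and]
      exact j.isLt
    have hmono : StrictMono (fun j : Fin k => (⟨(j : ℕ), by have := j.isLt; omega⟩ : Fin n)) :=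
      fun a b hab => Fin.lt_def.mpr (by simpa using hab)
    have := Finset.orderEmbOfFin_unique hX hmem hmono
    exact fun j => (congrFun this j).symm
  have h2 : ∀ j : Fin (n - k), Xᶜ.orderEmbOfFin (card_compl_eq hX) j
      = ⟨k + (j : ℕ), by have := j.isLt; omega⟩ := by
    have hmem : ∀ j : Fin (n - k), (⟨k + (j : ℕ), by have := j.isLt; omega⟩ : Fin n) ∈ Xᶜ := by
      intro j
      simp only [hXdef, Finset.mem_compl, Finset.mem_filter, Finset.mem_univ, true_and]
      omega
    have hmono : StrictMono
        (fun j : Fin (n - k) => (⟨k + (j : ℕ), by have := j.isLt; omega⟩ : Fin n)) :=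
      fun a b hab => Fin.lt_def.mpr (by simpa using hab)
    have := Finset.orderEmbOfFin_unique (card_compl_eq hX) hmem hmono
    exact fun j => (congrFun this j).symm
  unfold splitFun
  split_ifs with h
  · rw [h1]
  · rw [h2]
    exact Fin.ext (by simp; omega)

lemma sum_initial (hkn : k ≤ n) :
    ∑ x ∈ (univ : Finset (Fin n)).filter (fun i : Fin n => (i : ℕ) < k), (x : ℕ)
      = ∑ i ∈ Finset.range k, i := by
  have : (univ : Finset (Fin n)).filter (fun i : Fin n => (i : ℕ) < k)
      = Finset.map (Fin.castLEEmb hkn) univ := by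
    ext i
    simp only [Finset.mem_filter, Finset.mem_univ, true_and, Finset.mem_map]
    constructor
    · intro hi
      exact ⟨⟨(i : ℕ), hi⟩, Fin.ext rfl⟩
    · rintro ⟨j, -, rfl⟩
      exact j.isLt
  rw [this, Finset.sum_map]
  simp only [Function.Embedding.coeFn_mk, RelEmbedding.coe_toEmbedding, Fin.castLEEmb_apply,
    Fin.coe_castLE]
  exact Fin.sum_univ_eq_sum_range (fun i => i) k

lemma sign_splitPerm_aux (hkn : k ≤ n) : ∀ (m : ℕ) (X : Finset (Fin n)) (hX : X.card = k),
    (∑ x ∈ X, (x : ℕ)) = m →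
    (Equiv.Perm.sign (splitPerm X hX) : ℤ)
      = (-1) ^ (∑ x ∈ X, (x : ℕ) + ∑ i ∈ Finset.range k, i) := by
  intro m
  induction m using Nat.strong_induction_on with
  | _ m IH =>
    intro X hX hm
    by_cases hgap : ∃ y ∈ X, 0 < (y : ℕ) ∧
        (⟨(y : ℕ) - 1, lt_of_le_of_lt (Nat.sub_le _ _) y.isLt⟩ : Fin n) ∉ X
    · obtain ⟨y, hyX, hy0, hxX⟩ := hgap
      set x : Fin n := ⟨(y : ℕ) - 1, lt_of_le_of_lt (Nat.sub_le _ _) y.isLt⟩ with hxdef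
      have hxy : (y : ℕ) = (x : ℕ) + 1 := by simp [hxdef]; omega
      have hk1 : 1 ≤ k := by
        rw [← hX]; exact Finset.card_pos.mpr ⟨y, hyX⟩
      have hxe : x ∉ X.erase y := fun h => hxX (Finset.mem_of_mem_erase h)
      have hX' : (insert x (X.erase y)).card = k := by
        rw [Finset.card_insert_of_notMem hxe, Finset.card_erase_of_mem hyX, hX]
        omega
      have h1 : (∑ z ∈ X.erase y, (z : ℕ)) + (y : ℕ) = m := by
        rw [Finset.sum_erase_add]; exact hm; exact hyX
      have h2 : (∑ z ∈ insert x (X.erase y), (z : ℕ))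
          = (x : ℕ) + ∑ z ∈ X.erase y, (z : ℕ) := Finset.sum_insert hxe
      have hlt : (∑ z ∈ insert x (X.erase y), (z : ℕ)) < m := by omega
      have hperm : splitPerm X hX
          = (splitPerm (insert x (X.erase y)) hX').trans (Equiv.swap x y) :=
        Equiv.ext fun i => splitFun_swap hxX hyX hxy hX hX' i
      have hxy' : x ≠ y := fun h => by rw [h] at hxy; omega
      have hsign : Equiv.Perm.sign (splitPerm X hX)
          = Equiv.Perm.sign (Equiv.swap x y) * Equiv.Perm.sign (splitPerm (insert x (X.erase y)) hX') := by
        rw [hperm]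
        exact map_mul _ _ _
      rw [hsign, Equiv.Perm.sign_swap hxy']
      push_cast
      rw [IH _ hlt (insert x (X.erase y)) hX' rfl]
      rw [show (∑ x ∈ X, (x : ℕ)) + ∑ i ∈ Finset.range k, i
          = ((∑ z ∈ insert x (X.erase y), (z : ℕ)) + ∑ i ∈ Finset.range k, i) + 1 by omega]
      rw [pow_succ]
      ring
    · push_neg at hgap
      have key : ∀ t : ℕ, ∀ y ∈ X, ∀ z : Fin n, (z : ℕ) + t = (y : ℕ) → z ∈ X := by
        intro t
        induction t with
        | zero =>
          intro y hy z hz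
          have : z = y := Fin.ext (by omega)
          rwa [this]
        | succ t ih =>
          intro y hy z hz
          have hy0 : 0 < (y : ℕ) := by omega
          have hp := hgap y hy hy0
          exact ih _ hp z (by simp; omega)
      have hcl : ∀ y ∈ X, ∀ z : Fin n, (z : ℕ) ≤ (y : ℕ) → z ∈ X := by
        intro y hy z hz
        exact key ((y : ℕ) - (z : ℕ)) y hy z (by omega)
      have hXeq := eq_initial X hX hkn hcl
      subst hXeq
      have hperm : splitPerm _ hX = Equiv.refl (Fin n) :=
        Equiv.ext fun i => splitFun_initial hkn hX i
      rw [hperm]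
      simp only [Equiv.Perm.sign_refl, Units.val_one, Int.cast_one]
      rw [sum_initial hkn]
      exact (Even.neg_one_pow ⟨_, rfl⟩).symm

/-- Restricted determinant sum: summing `sgn(σ) ∏ A(i,σ(i))` over the permutations σ
with σ(X) = Y gives `(-1)^{ΣX}(-1)^{ΣY} det(A[X|Y]) det(A(X|Y))`. -/
theorem stmt4 {R : Type*} [CommRing R] {n k : ℕ}
    (hk : 1 ≤ k) (hkn : k < n)
    (A : Matrix (Fin n) (Fin n) R)
    (X Y : Finset (Fin n)) (hX : X.card = k) (hY : Y.card = k) :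
    (∑ σ ∈ Finset.univ.filter (fun σ : Equiv.Perm (Fin n) => X.image σ = Y),
        ((Equiv.Perm.sign σ : ℤ) : R) * ∏ i, A i (σ i))
      = (-1 : R) ^ (∑ x ∈ X, (x : ℕ)) * (-1 : R) ^ (∑ y ∈ Y, (y : ℕ)) *
        (A.submatrix ⇑(X.orderEmbOfFin hX) ⇑(Y.orderEmbOfFin hY)).det *
        (A.submatrix ⇑(Xᶜ.orderEmbOfFin (k := n - k) (by simp [Finset.card_compl, hX]))
                     ⇑(Yᶜ.orderEmbOfFin (k := n - k) (by simp [Finset.card_compl, hY]))).det := by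
  classical
  have hkn' : k ≤ n := hkn.le
  set B : Matrix (Fin n) (Fin n) R :=
    Matrix.of (fun i j => if (i ∈ X ↔ j ∈ Y) then A i j else 0) with hBdef
  have hBapp : ∀ i j, B i j = if (i ∈ X ↔ j ∈ Y) then A i j else 0 := fun i j => rfl
  -- Step 1 : the restricted sum is `det Bᵀ`
  have hstep1 : (∑ σ ∈ Finset.univ.filter (fun σ : Equiv.Perm (Fin n) => X.image σ = Y),
        ((Equiv.Perm.sign σ : ℤ) : R) * ∏ i, A i (σ i)) = B.transpose.det := by
    rw [Matrix.det_apply']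
    rw [← Finset.sum_filter_add_sum_filter_not Finset.univ
      (fun σ : Equiv.Perm (Fin n) => X.image σ = Y)]
    have hz : ∑ σ ∈ Finset.univ.filter
        (fun σ : Equiv.Perm (Fin n) => ¬ X.image σ = Y),
        ((Equiv.Perm.sign σ : ℤ) : R) * ∏ i, B.transpose (σ i) i = 0 := by
      apply Finset.sum_eq_zero
      intro σ hσ
      simp only [Finset.mem_filter] at hσ
      have himg := hσ.2
      have hns : ¬ X.image σ ⊆ Y := fun hsub => himg (Finset.eq_of_subset_of_card_le hsub
        (by rw [hY, Finset.card_image_of_injective _ σ.injective, hX]))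
      obtain ⟨a, ha, hna⟩ := Finset.not_subset.mp hns
      obtain ⟨i, hi, rfl⟩ := Finset.mem_image.mp ha
      have : B.transpose (σ i) i = 0 := by
        rw [Matrix.transpose_apply, hBapp, if_neg]
        intro hiff
        exact hna (hiff.mp hi)
      exact mul_eq_zero_of_right _ (Finset.prod_eq_zero (Finset.mem_univ i) this)
    rw [hz, add_zero]
    apply Finset.sum_congr rfl
    intro σ hσ
    simp only [Finset.mem_filter] at hσ
    have himg := hσ.2
    congr 1
    apply Finset.prod_congr rfl
    intro i _hi
    rw [Matrix.transpose_apply, hBapp, if_pos]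
    constructor
    · intro hi; rw [← himg]; exact Finset.mem_image_of_mem _ hi
    · intro hiY
      rw [← himg] at hiY
      obtain ⟨j, hj, hji⟩ := Finset.mem_image.mp hiY
      rwa [← σ.injective hji]
  -- Step 2 : `det B` in terms of the blocks
  have hadd : k + (n - k) = n := by omega
  set e : Fin n ≃ Fin k ⊕ Fin (n - k) := (finCongr hadd.symm).trans finSumFinEquiv.symm
    with hedef
  set A1 := A.submatrix ⇑(X.orderEmbOfFin hX) ⇑(Y.orderEmbOfFin hY) with hA1
  set A2 := A.submatrix ⇑(Xᶜ.orderEmbOfFin (card_compl_eq hX))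
    ⇑(Yᶜ.orderEmbOfFin (card_compl_eq hY)) with hA2
  have hei : ∀ i : Fin n, (h : (i : ℕ) < k) → e i = Sum.inl ⟨(i : ℕ), h⟩ := by
    intro i h
    have h1 : (finCongr hadd.symm) i = Fin.castAdd (n - k) ⟨(i : ℕ), h⟩ := Fin.ext rfl
    simp only [hedef, Equiv.trans_apply, h1, finSumFinEquiv_symm_apply_castAdd]
  have hei' : ∀ i : Fin n, (h : ¬ (i : ℕ) < k) →
      e i = Sum.inr ⟨(i : ℕ) - k, by have := i.isLt; omega⟩ := by
    intro i h
    have h1 : (finCongr hadd.symm) i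
        = Fin.natAdd k ⟨(i : ℕ) - k, by have := i.isLt; omega⟩ := Fin.ext (by simp; omega)
    simp only [hedef, Equiv.trans_apply, h1, finSumFinEquiv_symm_apply_natAdd]
  have hsub : B.submatrix (⇑(splitPerm X hX)) (⇑(splitPerm Y hY))
      = (Matrix.fromBlocks A1 0 0 A2).submatrix e e := by
    ext i j
    simp only [Matrix.submatrix_apply, splitPerm_apply]
    unfold splitFun
    by_cases hi : (i : ℕ) < k <;> by_cases hj : (j : ℕ) < k
    · rw [hei i hi, hei j hj]
      simp only [dif_pos hi, dif_pos hj]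
      rw [hBapp, if_pos]
      · rfl
      · constructor
        · intro _; exact Finset.orderEmbOfFin_mem _ hY _
        · intro _; exact Finset.orderEmbOfFin_mem _ hX _
    · rw [hei i hi, hei' j hj]
      simp only [dif_pos hi, dif_neg hj]
      rw [hBapp, if_neg]
      · rfl
      · intro hiff
        have h1 : X.orderEmbOfFin hX ⟨(i : ℕ), hi⟩ ∈ X := Finset.orderEmbOfFin_mem _ _ _
        have h2 := Finset.orderEmbOfFin_mem Yᶜ (card_compl_eq hY)
          ⟨(j : ℕ) - k, by have := j.isLt; omega⟩
        exact (Finset.mem_compl.mp h2) (hiff.mp h1)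
    · rw [hei' i hi, hei j hj]
      simp only [dif_neg hi, dif_pos hj]
      rw [hBapp, if_neg]
      · rfl
      · intro hiff
        have h1 : Y.orderEmbOfFin hY ⟨(j : ℕ), hj⟩ ∈ Y := Finset.orderEmbOfFin_mem _ _ _
        have h2 := Finset.orderEmbOfFin_mem Xᶜ (card_compl_eq hX)
          ⟨(i : ℕ) - k, by have := i.isLt; omega⟩
        exact (Finset.mem_compl.mp h2) (hiff.mpr h1)
    · rw [hei' i hi, hei' j hj]
      simp only [dif_neg hi, dif_neg hj]
      rw [hBapp, if_pos]
      · rfl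
      · have h2 := Finset.orderEmbOfFin_mem Xᶜ (card_compl_eq hX)
          ⟨(i : ℕ) - k, by have := i.isLt; omega⟩
        have h3 := Finset.orderEmbOfFin_mem Yᶜ (card_compl_eq hY)
          ⟨(j : ℕ) - k, by have := j.isLt; omega⟩
        exact ⟨fun h => absurd h (Finset.mem_compl.mp h2),
          fun h => absurd h (Finset.mem_compl.mp h3)⟩
  have hdetsub : (B.submatrix (⇑(splitPerm X hX)) (⇑(splitPerm Y hY))).det
      = A1.det * A2.det := by
    rw [hsub, Matrix.det_submatrix_equiv_self, Matrix.det_fromBlocks_zero₂₁]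
  have hperm1 : (B.submatrix (⇑(splitPerm X hX)) (⇑(splitPerm Y hY))).det
      = ((Equiv.Perm.sign (splitPerm X hX) : ℤ) : R)
        * (((Equiv.Perm.sign (splitPerm Y hY) : ℤ) : R) * B.det) := by
    have h1 : B.submatrix (⇑(splitPerm X hX)) (⇑(splitPerm Y hY))
        = (B.submatrix id (⇑(splitPerm Y hY))).submatrix (⇑(splitPerm X hX)) id := rfl
    rw [h1, Matrix.det_permute, Matrix.det_permute']
  set sX : R := ((Equiv.Perm.sign (splitPerm X hX) : ℤ) : R) with hsXdef
  set sY : R := ((Equiv.Perm.sign (splitPerm Y hY) : ℤ) : R) with hsYdef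
  have hsX' : sX = (-1 : R) ^ (∑ x ∈ X, (x : ℕ) + ∑ i ∈ Finset.range k, i) := by
    rw [hsXdef, sign_splitPerm_aux hkn' (∑ x ∈ X, (x : ℕ)) X hX rfl]
    push_cast
    ring
  have hsY' : sY = (-1 : R) ^ (∑ y ∈ Y, (y : ℕ) + ∑ i ∈ Finset.range k, i) := by
    rw [hsYdef, sign_splitPerm_aux hkn' (∑ y ∈ Y, (y : ℕ)) Y hY rfl]
    push_cast
    ring
  have hux : sX * sX = 1 := by
    rw [hsX', ← pow_add]
    exact Even.neg_one_pow ⟨_, rfl⟩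
  have huy : sY * sY = 1 := by
    rw [hsY', ← pow_add]
    exact Even.neg_one_pow ⟨_, rfl⟩
  have hdetB : B.det = (sX * sY) * (A1.det * A2.det) := by
    calc B.det = (sX * sX) * (sY * sY) * B.det := by rw [hux, huy]; ring
    _ = (sX * sY) * (sX * (sY * B.det)) := by ring
    _ = (sX * sY) * (A1.det * A2.det) := by rw [← hperm1, hdetsub]
  have final : (-1 : R) ^ (∑ x ∈ X, (x : ℕ) + ∑ i ∈ Finset.range k, i)
      * (-1 : R) ^ (∑ y ∈ Y, (y : ℕ) + ∑ i ∈ Finset.range k, i)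
      = (-1 : R) ^ (∑ x ∈ X, (x : ℕ)) * (-1 : R) ^ (∑ y ∈ Y, (y : ℕ)) := by
    rw [pow_add, pow_add]
    have h4 : (-1 : R) ^ (∑ i ∈ Finset.range k, i) * (-1 : R) ^ (∑ i ∈ Finset.range k, i)
        = 1 := by
      rw [← pow_add]
      exact Even.neg_one_pow ⟨_, rfl⟩
    linear_combination ((-1 : R) ^ (∑ x ∈ X, (x : ℕ)) * (-1 : R) ^ (∑ y ∈ Y, (y : ℕ))) * h4
  rw [hstep1, Matrix.det_transpose, hdetB, hsX', hsY']
  rw [show (-1 : R) ^ (∑ x ∈ X, (x : ℕ) + ∑ i ∈ Finset.range k, i)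
      * (-1 : R) ^ (∑ y ∈ Y, (y : ℕ) + ∑ i ∈ Finset.range k, i) * (A1.det * A2.det)
      = (-1 : R) ^ (∑ x ∈ X, (x : ℕ)) * (-1 : R) ^ (∑ y ∈ Y, (y : ℕ)) * A1.det * A2.det by
    rw [final]; ring]
end

section
/- (Laplace expansion theorem, general form) Let A be an n×n matrix over a commutative ring and X ⊆ {1,...,n} a fixed subset of size k, 1 ≤ k < n. Then det(A) = (-1)^{ΣX} Σ_{Y ∈ P_k(n)} (-1)^{ΣY} det(A[X|Y]) det(A(X|Y)), where the sum is over all k-element subsets Y of {1,...,n}. -/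
open Finset Equiv

/-- Moving an element of `S` to an adjacent vacant slot composes `orderEmbOfFin` with a swap. -/
lemma lap_swap_orderEmbOfFin {n c : ℕ} {S : Finset (Fin n)} (hS : S.card = c)
    {u v : Fin n} (huv : (u : ℕ) + 1 = (v : ℕ) ∨ (v : ℕ) + 1 = (u : ℕ))
    (hu : u ∉ S) (hv : v ∈ S) (hS' : (insert u (S.erase v)).card = c) (a : Fin c) :
    (insert u (S.erase v)).orderEmbOfFin hS' a = Equiv.swap u v (S.orderEmbOfFin hS a) := by
  have hmem : ∀ x : Fin c, Equiv.swap u v (S.orderEmbOfFin hS x) ∈ insert u (S.erase v) := by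
    intro x
    have hx := S.orderEmbOfFin_mem hS x
    have hxu : S.orderEmbOfFin hS x ≠ u := fun h => hu (h ▸ hx)
    rcases eq_or_ne (S.orderEmbOfFin hS x) v with h | h
    · rw [h, Equiv.swap_apply_right]; exact mem_insert_self _ _
    · rw [Equiv.swap_apply_of_ne_of_ne hxu h]
      exact mem_insert_of_mem (mem_erase.2 ⟨h, hx⟩)
  have hmono : StrictMono fun x : Fin c => Equiv.swap u v (S.orderEmbOfFin hS x) := by
    intro x y hxy
    have hx := S.orderEmbOfFin_mem hS x
    have hy := S.orderEmbOfFin_mem hS y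
    have hxu : S.orderEmbOfFin hS x ≠ u := fun h => hu (h ▸ hx)
    have hyu : S.orderEmbOfFin hS y ≠ u := fun h => hu (h ▸ hy)
    have hlt : S.orderEmbOfFin hS x < S.orderEmbOfFin hS y :=
      (S.orderEmbOfFin hS).strictMono hxy
    have hxy' : S.orderEmbOfFin hS x ≠ S.orderEmbOfFin hS y := ne_of_lt hlt
    simp only [Equiv.swap_apply_def]
    rw [Fin.lt_def] at hlt
    rw [Fin.ne_iff_vne] at hxu hyu hxy'
    split_ifs with h1 h2 h3 h4 h5 h6 h7 h8 <;>
      first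
      | exact hlt
      | (apply Fin.lt_def.2
         try rw [Fin.ext_iff] at h1 h2 h3 h4 h5 h6 h7 h8
         omega)
  have := (Finset.orderEmbOfFin_unique hS' hmem hmono)
  exact (congrFun this a).symm

section LapAux

variable {n k m : ℕ}

lemma lap_mem_iff (Y : Finset (Fin n)) (h1 : Y.card = k) (h2 : Yᶜ.card = m)
    (s : Fin k ⊕ Fin m) :
    finSumEquivOfFinset h1 h2 s ∈ Y ↔ s.isLeft := by
  cases s with
  | inl a => simpa using Y.orderEmbOfFin_mem h1 a
  | inr b =>
    have := Yᶜ.orderEmbOfFin_mem h2 b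
    rw [Finset.mem_compl] at this
    simpa using this


lemma lapPi_sign {n k m : ℕ} (hn : k + m = n) :
    ∀ s : ℕ, ∀ (Y : Finset (Fin n)) (h1 : Y.card = k) (h2 : Yᶜ.card = m),
      (∑ y ∈ Y, (y : ℕ)) = s →
      ((Equiv.Perm.sign ((finSumFinEquiv.trans (finCongr hn)).symm.trans
          (finSumEquivOfFinset h1 h2) : Equiv.Perm (Fin n))) : ℤ) * (-1) ^ s =
        (-1) ^ (∑ i ∈ Finset.range k, i) := by
  intro s
  induction s using Nat.strong_induction_on with
  | _ s IH =>
  intro Y h1 h2 hs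
  by_cases hex : ∃ v ∈ Y, ∃ u : Fin n, (u : ℕ) + 1 = (v : ℕ) ∧ u ∉ Y
  · obtain ⟨v, hv, u, huv, hu⟩ := hex
    set Y' : Finset (Fin n) := insert u (Y.erase v) with hY'
    have hne : u ≠ v := fun h => by rw [h] at huv; omega
    have huev : u ∉ Y.erase v := fun h => hu (Finset.mem_of_mem_erase h)
    have h1' : Y'.card = k := by
      rw [hY', Finset.card_insert_of_notMem huev, Finset.card_erase_of_mem hv, h1]
      have : 0 < k := h1 ▸ Finset.card_pos.2 ⟨v, hv⟩
      omega
    have hcompl : Y'ᶜ = insert v (Yᶜ.erase u) := by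
      ext x
      simp only [Finset.mem_compl, hY', Finset.mem_insert, Finset.mem_erase]
      constructor
      · intro hx
        by_cases hxv : x = v
        · exact Or.inl hxv
        · exact Or.inr ⟨fun h => hx (Or.inl h), fun h => hx (Or.inr ⟨hxv, h⟩)⟩
      · rintro (rfl | ⟨hxu, hxY⟩)
        · rintro (h | ⟨_, _⟩)
          · exact hne h.symm
          · simp_all
        · rintro (h | ⟨_, h⟩)
          · exact hxu h
          · exact hxY h
    have h2' : Y'ᶜ.card = m := by
      rw [hcompl, Finset.card_insert_of_notMem, Finset.card_erase_of_mem
        (Finset.mem_compl.2 hu), h2]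
      · have : 0 < m := h2 ▸ Finset.card_pos.2 ⟨u, Finset.mem_compl.2 hu⟩
        omega
      · intro h
        exact (Finset.mem_compl.1 (Finset.mem_of_mem_erase h)) hv
    have hsum : (∑ y ∈ Y', (y : ℕ)) + 1 = s := by
      rw [hY', Finset.sum_insert huev, ← hs, ← Finset.add_sum_erase Y _ hv]
      omega
    have hstep : ∀ x, ((finSumFinEquiv.trans (finCongr hn)).symm.trans
        (finSumEquivOfFinset h1' h2') : Equiv.Perm (Fin n)) x =
        Equiv.swap u v (((finSumFinEquiv.trans (finCongr hn)).symm.trans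
          (finSumEquivOfFinset h1 h2) : Equiv.Perm (Fin n)) x) := by
      intro x
      rw [Equiv.trans_apply, Equiv.trans_apply]
      cases ht : (finSumFinEquiv.trans (finCongr hn)).symm x with
      | inl a =>
        rw [finSumEquivOfFinset_inl, finSumEquivOfFinset_inl]
        exact lap_swap_orderEmbOfFin h1 (Or.inl huv) hu hv h1' a
      | inr b =>
        rw [finSumEquivOfFinset_inr, finSumEquivOfFinset_inr]
        have key : ∀ (T : Finset (Fin n)) (hT2 : T.card = m),
            T = insert v (Yᶜ.erase u) →
            T.orderEmbOfFin hT2 b = Equiv.swap u v (Yᶜ.orderEmbOfFin h2 b) := by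
          rintro T hT2 rfl
          rw [Equiv.swap_comm]
          exact lap_swap_orderEmbOfFin h2 (Or.inr huv) (fun h => (Finset.mem_compl.1 h) hv)
            (Finset.mem_compl.2 hu) hT2 b
        exact key Y'ᶜ h2' hcompl
    have heq : ((finSumFinEquiv.trans (finCongr hn)).symm.trans
        (finSumEquivOfFinset h1' h2') : Equiv.Perm (Fin n)) =
        Equiv.swap u v * ((finSumFinEquiv.trans (finCongr hn)).symm.trans
          (finSumEquivOfFinset h1 h2) : Equiv.Perm (Fin n)) := Equiv.ext hstep
    have hIH := IH (∑ y ∈ Y', (y : ℕ)) (by omega) Y' h1' h2' rfl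
    rw [heq, map_mul, Equiv.Perm.sign_swap hne] at hIH
    rw [← hsum, pow_succ] at *
    push_cast at hIH ⊢
    linarith [hIH]
  · subst hs
    push_neg at hex
    have dc2 : ∀ d : ℕ, ∀ v ∈ Y, ∀ u : Fin n, (u : ℕ) + d = (v : ℕ) → u ∈ Y := by
      intro d
      induction d with
      | zero => intro v hv u h; rwa [show u = v from Fin.ext (by omega)]
      | succ d ih =>
        intro v hv u h
        have hw : (u : ℕ) + 1 < n := by have := v.isLt; omega
        have hwY : (⟨(u : ℕ) + 1, hw⟩ : Fin n) ∈ Y := ih v hv _ (by simpa using by omega)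
        exact hex _ hwY u rfl
    have hkn : k ≤ n := by omega
    have memiff : ∀ i : Fin n, i ∈ Y ↔ (i : ℕ) < k := by
      intro i
      constructor
      · intro hi
        by_contra hik
        have hsub : Finset.Iic i ⊆ Y := by
          intro j hj
          rw [Finset.mem_Iic] at hj
          exact dc2 ((i : ℕ) - (j : ℕ)) i hi j (by omega)
        have := Finset.card_le_card hsub
        rw [Fin.card_Iic, h1] at this
        omega
      · intro hik
        by_contra hi
        have hsub : Y ⊆ Finset.Iio i := by
          intro y hy
          rw [Finset.mem_Iio]
          by_contra hyi
          exact hi (dc2 ((y : ℕ) - (i : ℕ)) y hy i (by omega))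
        have := Finset.card_le_card hsub
        rw [Fin.card_Iio, h1] at this
        omega
    have hYemb : ∀ a : Fin k, Y.orderEmbOfFin h1 a = Fin.castLE hkn a := by
      have := Finset.orderEmbOfFin_unique h1 (f := fun a => Fin.castLE hkn a)
        (fun a => (memiff _).2 (by simpa using a.isLt)) (fun a b hab => by simpa using hab)
      exact fun a => (congrFun this a).symm
    have hYc : ∀ b : Fin m, Yᶜ.orderEmbOfFin h2 b = ⟨k + (b : ℕ), by omega⟩ := by
      have := Finset.orderEmbOfFin_unique h2 (f := fun b : Fin m => (⟨k + (b : ℕ), by omega⟩ : Fin n))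
        (fun b => Finset.mem_compl.2 (fun h => by have := (memiff _).1 h; simp at this))
        (fun a b hab => by simp only [Fin.lt_def] at *; omega)
      exact fun b => (congrFun this b).symm
    have hid : ((finSumFinEquiv.trans (finCongr hn)).symm.trans
        (finSumEquivOfFinset h1 h2) : Equiv.Perm (Fin n)) = Equiv.refl _ := by
      apply Equiv.ext
      intro x
      obtain ⟨t, rfl⟩ := (finSumFinEquiv.trans (finCongr hn)).surjective x
      rw [Equiv.trans_apply, Equiv.symm_apply_apply, Equiv.refl_apply]
      cases t with
      | inl a =>
        rw [finSumEquivOfFinset_inl, hYemb]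
        apply Fin.ext; simp
      | inr b =>
        rw [finSumEquivOfFinset_inr, hYc]
        apply Fin.ext; simp
    rw [hid]
    have hsumY : (∑ y ∈ Y, (y : ℕ)) = ∑ i ∈ Finset.range k, i := by
      rw [show (∑ y ∈ Y, (y : ℕ)) = ∑ a : Fin k, ((Y.orderEmbOfFin h1 a : Fin n) : ℕ) from ?_]
      · rw [← Fin.sum_univ_eq_sum_range]
        exact Finset.sum_congr rfl fun a _ => by rw [hYemb]; simp
      · refine Finset.sum_bij (fun (a : Fin k) _ => Y.orderEmbOfFin h1 a) ?_ ?_ ?_ ?_ |>.symm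
        · intro a _; exact Y.orderEmbOfFin_mem h1 a
        · intro a _ b _ h; exact (Y.orderEmbOfFin h1).injective h
        · intro y hy
          have : y ∈ Set.range (Y.orderEmbOfFin h1) := by
            rw [Finset.range_orderEmbOfFin]; exact hy
          obtain ⟨a, ha⟩ := this
          exact ⟨a, Finset.mem_univ a, ha⟩
        · intro a _; rfl
    rw [hsumY]
    simp



end LapAux

section LapFiber

variable {n k m : ℕ}


lemma lap_fiber {R : Type*} [CommRing R] (hn : k + m = n) (A : Matrix (Fin n) (Fin n) R)
    (X : Finset (Fin n)) (hX : X.card = k) (hXc : Xᶜ.card = m)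
    (Y : Finset (Fin n)) (hY : Y.card = k) (hYc : Yᶜ.card = m) :
    ∑ σ ∈ Finset.univ.filter
        (fun σ : Equiv.Perm (Fin n) => Finset.univ.filter (fun i => σ i ∈ X) = Y),
      ((Equiv.Perm.sign σ : ℤ) : R) * ∏ i, A (σ i) i =
    ((Equiv.Perm.sign ((finSumFinEquiv.trans (finCongr hn)).symm.trans
        (finSumEquivOfFinset hX hXc) : Equiv.Perm (Fin n)) : ℤ) : R) *
    ((Equiv.Perm.sign ((finSumFinEquiv.trans (finCongr hn)).symm.trans
        (finSumEquivOfFinset hY hYc) : Equiv.Perm (Fin n)) : ℤ) : R) *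
      ((A.submatrix (X.orderEmbOfFin hX) (Y.orderEmbOfFin hY)).det *
       (A.submatrix (Xᶜ.orderEmbOfFin hXc) (Yᶜ.orderEmbOfFin hYc)).det) := by
  set eX := finSumEquivOfFinset hX hXc with heX
  set eY := finSumEquivOfFinset hY hYc with heY
  set e0 : Fin k ⊕ Fin m ≃ Fin n := finSumFinEquiv.trans (finCongr hn) with he0
  set πX : Equiv.Perm (Fin n) := e0.symm.trans eX with hπX
  set πY : Equiv.Perm (Fin n) := e0.symm.trans eY with hπY
  set Φ : Equiv.Perm (Fin k) × Equiv.Perm (Fin m) → Equiv.Perm (Fin n) :=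
    fun τ => (eY.symm.trans (Equiv.sumCongr τ.1 τ.2)).trans eX with hΦdef
  have hΦ : ∀ τ (s : Fin k ⊕ Fin m), Φ τ (eY s) = eX (Equiv.sumCongr τ.1 τ.2 s) := by
    intro τ s; simp [hΦdef]
  have hΦmul : ∀ τ, Φ τ = πX * (e0.permCongr (Equiv.sumCongr τ.1 τ.2)) * πY⁻¹ := by
    intro τ
    apply Equiv.ext
    intro x
    simp [hΦdef, hπX, hπY, Equiv.permCongr_apply, Equiv.Perm.mul_apply, Equiv.Perm.inv_def]
  have hsign : ∀ τ : Equiv.Perm (Fin k) × Equiv.Perm (Fin m),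
      Equiv.Perm.sign (Φ τ) =
        Equiv.Perm.sign πX * Equiv.Perm.sign πY *
          (Equiv.Perm.sign τ.1 * Equiv.Perm.sign τ.2) := by
    intro τ
    rw [hΦmul τ, map_mul, map_mul, Equiv.Perm.sign_permCongr, Equiv.Perm.sign_sumCongr,
      map_inv]
    simp [mul_comm, mul_assoc, mul_left_comm]
  -- rewrite RHS as a sum over pairs of permutations
  have hmX : ∀ s : Fin k ⊕ Fin m, eX s ∈ X ↔ s.isLeft := fun s => lap_mem_iff X hX hXc s
  have hmY : ∀ s : Fin k ⊕ Fin m, eY s ∈ Y ↔ s.isLeft := fun s => lap_mem_iff Y hY hYc s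
  rw [Matrix.det_apply', Matrix.det_apply', Finset.sum_mul_sum]
  simp only [Finset.mul_sum]
  rw [← Finset.sum_product', Finset.univ_product_univ]
  refine (Finset.sum_bij' (fun τ _ => Φ τ)
    (fun σ hσ => ?jdef) ?hi ?hj ?lefti ?righti ?hsummand).symm
  case jdef =>
    -- construct (τ1, τ2) from σ
    simp only [Finset.mem_filter, Finset.mem_univ, true_and] at hσ
    have hmem : ∀ i : Fin n, σ i ∈ X ↔ i ∈ Y := by
      intro i
      rw [← hσ, Finset.mem_filter]
      simp
    have hbl : ∀ a : Fin k, ∃ c : Fin k, eX.symm (σ (eY (Sum.inl a))) = Sum.inl c := by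
      intro a
      have h1 : σ (eY (Sum.inl a)) ∈ X :=
        (hmem _).2 ((hmY _).2 rfl)
      have h2 : (eX.symm (σ (eY (Sum.inl a)))).isLeft := by
        rw [← hmX, Equiv.apply_symm_apply]
        exact h1
      exact Sum.isLeft_iff.1 h2
    have hbr : ∀ b : Fin m, ∃ c : Fin m, eX.symm (σ (eY (Sum.inr b))) = Sum.inr c := by
      intro b
      have h1 : σ (eY (Sum.inr b)) ∉ X := by
        rw [hmem, hmY]
        simp
      have h2 : ¬(eX.symm (σ (eY (Sum.inr b)))).isLeft := by
        rw [← hmX, Equiv.apply_symm_apply]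
        exact h1
      exact Sum.isRight_iff.1 (Sum.not_isLeft.1 h2)
    refine (Equiv.ofBijective (fun a : Fin k =>
        (eX.symm (σ (eY (Sum.inl a)))).elim id (fun _ => a)) ?_,
      Equiv.ofBijective (fun b : Fin m =>
        (eX.symm (σ (eY (Sum.inr b)))).elim (fun _ => b) id) ?_)
    · refine Finite.injective_iff_bijective.1 ?_
      intro a a' h
      obtain ⟨c, hc⟩ := hbl a
      obtain ⟨c', hc'⟩ := hbl a'
      simp only [hc, hc', Sum.elim_inl, id] at h
      have : eX.symm (σ (eY (Sum.inl a))) = eX.symm (σ (eY (Sum.inl a'))) := by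
        rw [hc, hc', h]
      have := eY.injective (σ.injective (eX.symm.injective this))
      exact Sum.inl_injective this
    · refine Finite.injective_iff_bijective.1 ?_
      intro b b' h
      obtain ⟨c, hc⟩ := hbr b
      obtain ⟨c', hc'⟩ := hbr b'
      simp only [hc, hc', Sum.elim_inr, id] at h
      have : eX.symm (σ (eY (Sum.inr b))) = eX.symm (σ (eY (Sum.inr b'))) := by
        rw [hc, hc', h]
      have := eY.injective (σ.injective (eX.symm.injective this))
      exact Sum.inr_injective this
  case hi =>
    intro τ _
    simp only [Finset.mem_filter, Finset.mem_univ, true_and]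
    ext i
    simp only [Finset.mem_filter, Finset.mem_univ, true_and]
    conv_lhs => rw [← Equiv.apply_symm_apply eY i]
    rw [hΦ, hmX]
    conv_rhs => rw [← Equiv.apply_symm_apply eY i]
    rw [hmY]
    cases eY.symm i <;> simp
  case hj => intro σ hσ; exact Finset.mem_univ _
  case lefti =>
    intro τ _
    apply Prod.ext
    · apply Equiv.ext
      intro a
      simp only [Equiv.ofBijective_apply, hΦ]
      rw [Equiv.symm_apply_apply]
      rfl
    · apply Equiv.ext
      intro b
      simp only [Equiv.ofBijective_apply, hΦ]
      rw [Equiv.symm_apply_apply]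
      rfl
  case righti =>
    intro σ hσ
    apply Equiv.ext
    intro x
    conv_rhs => rw [← Equiv.apply_symm_apply eY x]
    conv_lhs => rw [← Equiv.apply_symm_apply eY x]
    rw [hΦ]
    simp only [Finset.mem_filter, Finset.mem_univ, true_and] at hσ
    have hmem : ∀ i : Fin n, σ i ∈ X ↔ i ∈ Y := by
      intro i; rw [← hσ, Finset.mem_filter]; simp
    cases hc : eY.symm x with
    | inl a =>
      have h1 : σ (eY (Sum.inl a)) ∈ X := (hmem _).2 ((hmY _).2 rfl)
      have h2 : (eX.symm (σ (eY (Sum.inl a)))).isLeft := by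
        rw [← hmX, Equiv.apply_symm_apply]
        exact h1
      obtain ⟨c, hc2⟩ := Sum.isLeft_iff.1 h2
      simp only [Equiv.sumCongr_apply, Sum.map_inl, Equiv.ofBijective_apply, hc2,
        Sum.elim_inl, id]
      rw [← hc2, Equiv.apply_symm_apply]
    | inr b =>
      have h1 : σ (eY (Sum.inr b)) ∉ X := by
        rw [hmem, hmY]; simp
      have h2 : ¬(eX.symm (σ (eY (Sum.inr b)))).isLeft := by
        rw [← hmX, Equiv.apply_symm_apply]
        exact h1
      obtain ⟨c, hc2⟩ := Sum.isRight_iff.1 (Sum.not_isLeft.1 h2)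
      simp only [Equiv.sumCongr_apply, Sum.map_inr, Equiv.ofBijective_apply, hc2,
        Sum.elim_inr, id]
      rw [← hc2, Equiv.apply_symm_apply]
  case hsummand =>
    intro τ _
    -- signs
    rw [hsign τ]
    -- product
    have hprod : (∏ i, A (Φ τ i) i) =
        (∏ a : Fin k, (A.submatrix (X.orderEmbOfFin hX) (Y.orderEmbOfFin hY)) (τ.1 a) a) *
        (∏ b : Fin m, (A.submatrix (Xᶜ.orderEmbOfFin hXc) (Yᶜ.orderEmbOfFin hYc)) (τ.2 b) b) := by
      rw [← Equiv.prod_comp eY (fun i => A (Φ τ i) i)]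
      rw [show (∏ s : Fin k ⊕ Fin m, A (Φ τ (eY s)) (eY s)) =
          ∏ s : Fin k ⊕ Fin m, A (eX (Equiv.sumCongr τ.1 τ.2 s)) (eY s) from
        Finset.prod_congr rfl fun s _ => by rw [hΦ]]
      rw [Fintype.prod_sum_type]
      simp only [heX, heY, Equiv.sumCongr_apply, Sum.map_inl, Sum.map_inr,
        finSumEquivOfFinset_inl, finSumEquivOfFinset_inr, Matrix.submatrix_apply]
    rw [hprod]
    push_cast
    ring
  done

end LapFiber

/-- Laplace expansion theorem (general, fixed-rows form): for a fixed row set `X` of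
size `k`, `det(A) = (-1)^{ΣX} Σ_{Y ∈ P_k(n)} (-1)^{ΣY} det(A[X|Y]) det(A(X|Y))`. -/
theorem stmt5 {R : Type*} [CommRing R] {n k : ℕ} (hk : 1 ≤ k) (hkn : k < n)
    (A : Matrix (Fin n) (Fin n) R) (X : Finset (Fin n)) (hX : X.card = k) :
    A.det = (-1 : R) ^ (∑ x ∈ X, (x : ℕ)) *
      ∑ Y ∈ ((Finset.univ : Finset (Fin n)).powersetCard k).attach,
        (-1 : R) ^ (∑ y ∈ Y.1, (y : ℕ)) *
        (A.submatrix ⇑(X.orderEmbOfFin hX)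
           ⇑(Y.1.orderEmbOfFin (Finset.mem_powersetCard.mp Y.2).2)).det *
        (A.submatrix ⇑(Xᶜ.orderEmbOfFin (k := n - k) (by simp [Finset.card_compl, hX]))
           ⇑((Y.1)ᶜ.orderEmbOfFin (k := n - k) (by
              simp [Finset.card_compl, (Finset.mem_powersetCard.mp Y.2).2]))).det := by
  have hXc : Xᶜ.card = n - k := by simp [Finset.card_compl, hX]
  have hn : k + (n - k) = n := by omega
  have hsq : ∀ t : ℕ, ((-1 : ℤ)) ^ t * (-1) ^ t = 1 := fun t => by
    rw [← pow_add]; exact Even.neg_one_pow ⟨t, by ring⟩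
  have hsgn : ∀ (Z : Finset (Fin n)) (hZ : Z.card = k) (hZc : Zᶜ.card = n - k),
      ((Equiv.Perm.sign ((finSumFinEquiv.trans (finCongr hn)).symm.trans
          (finSumEquivOfFinset hZ hZc) : Equiv.Perm (Fin n))) : ℤ) =
        (-1) ^ (∑ i ∈ Finset.range k, i) * (-1) ^ (∑ z ∈ Z, (z : ℕ)) := by
    intro Z hZ hZc
    have h := lapPi_sign hn _ Z hZ hZc rfl
    have h2 := hsq (∑ z ∈ Z, (z : ℕ))
    linear_combination ((-1 : ℤ) ^ (∑ z ∈ Z, (z : ℕ))) * h -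
      ((Equiv.Perm.sign ((finSumFinEquiv.trans (finCongr hn)).symm.trans
          (finSumEquivOfFinset hZ hZc) : Equiv.Perm (Fin n))) : ℤ) * h2
  have hmaps : ∀ σ ∈ (Finset.univ : Finset (Equiv.Perm (Fin n))),
      Finset.univ.filter (fun i => σ i ∈ X) ∈ (Finset.univ : Finset (Fin n)).powersetCard k := by
    intro σ _
    rw [Finset.mem_powersetCard]
    refine ⟨Finset.subset_univ _, ?_⟩
    have himg : Finset.univ.filter (fun i => σ i ∈ X) = X.image σ.symm := by
      ext i
      simp only [Finset.mem_filter, Finset.mem_univ, true_and, Finset.mem_image]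
      constructor
      · intro h; exact ⟨σ i, h, Equiv.symm_apply_apply _ _⟩
      · rintro ⟨x, hx, rfl⟩; rwa [Equiv.apply_symm_apply]
    rw [himg, Finset.card_image_of_injective _ σ.symm.injective, hX]
  rw [Matrix.det_apply', ← Finset.sum_fiberwise_of_maps_to hmaps]
  have hstep : ∀ Y ∈ (Finset.univ : Finset (Fin n)).powersetCard k,
      (∑ σ ∈ Finset.univ.filter (fun σ : Equiv.Perm (Fin n) =>
          Finset.univ.filter (fun i => σ i ∈ X) = Y),
        ((Equiv.Perm.sign σ : ℤ) : R) * ∏ i, A (σ i) i) =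
      (if h : Y.card = k then
        (-1 : R) ^ (∑ x ∈ X, (x : ℕ)) *
          ((-1 : R) ^ (∑ y ∈ Y, (y : ℕ)) *
            (A.submatrix (X.orderEmbOfFin hX) (Y.orderEmbOfFin h)).det *
            (A.submatrix (Xᶜ.orderEmbOfFin hXc)
              (Yᶜ.orderEmbOfFin (k := n - k) (by simp [Finset.card_compl, h]))).det)
       else 0) := by
    intro Y hY
    have h1 : Y.card = k := (Finset.mem_powersetCard.mp hY).2
    have h2 : Yᶜ.card = n - k := by simp [Finset.card_compl, h1]
    rw [dif_pos h1]
    have key : (∑ σ ∈ Finset.univ.filter (fun σ : Equiv.Perm (Fin n) =>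
          Finset.univ.filter (fun i => σ i ∈ X) = Y),
        ((Equiv.Perm.sign σ : ℤ) : R) * ∏ i, A (σ i) i) =
        (-1 : R) ^ (∑ x ∈ X, (x : ℕ)) *
          ((-1 : R) ^ (∑ y ∈ Y, (y : ℕ)) *
            (A.submatrix (X.orderEmbOfFin hX) (Y.orderEmbOfFin h1)).det *
            (A.submatrix (Xᶜ.orderEmbOfFin hXc) (Yᶜ.orderEmbOfFin h2)).det) := by
      rw [lap_fiber hn A X hX hXc Y h1 h2, hsgn X hX hXc, hsgn Y h1 h2]
      push_cast
      have h3 : ((-1 : R)) ^ (∑ i ∈ Finset.range k, i) *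
          (-1 : R) ^ (∑ i ∈ Finset.range k, i) = 1 := by
        rw [← pow_add]; exact Even.neg_one_pow ⟨_, by ring⟩
      linear_combination ((-1 : R) ^ (∑ x ∈ X, (x : ℕ)) * (-1 : R) ^ (∑ y ∈ Y, (y : ℕ)) *
        (A.submatrix (X.orderEmbOfFin hX) (Y.orderEmbOfFin h1)).det *
        (A.submatrix (Xᶜ.orderEmbOfFin hXc) (Yᶜ.orderEmbOfFin h2)).det) * h3
    exact key.trans rfl
  rw [Finset.sum_congr rfl hstep, Finset.mul_sum]
  rw [← Finset.sum_attach ((Finset.univ : Finset (Fin n)).powersetCard k)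
    (fun Y => if h : Y.card = k then
        (-1 : R) ^ (∑ x ∈ X, (x : ℕ)) *
          ((-1 : R) ^ (∑ y ∈ Y, (y : ℕ)) *
            (A.submatrix (X.orderEmbOfFin hX) (Y.orderEmbOfFin h)).det *
            (A.submatrix (Xᶜ.orderEmbOfFin hXc)
              (Yᶜ.orderEmbOfFin (k := n - k) (by simp [Finset.card_compl, h]))).det)
       else 0)]
  refine Finset.sum_congr rfl fun Y _ => ?_
  rw [dif_pos (Finset.mem_powersetCard.mp Y.2).2]
end

section
/- An n×n matrix A over a Euclidean domain is a unit in the matrix ring (i.e., invertible) if and only if it is a product of elementary row matrices (of types I, II, and III). -/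
/-- Type I elementary matrix: row swap. -/
def IsTypeI {R : Type*} [CommRing R] {n : ℕ} (E : Matrix (Fin n) (Fin n) R) : Prop :=
  ∃ i j : Fin n, E = (1 : Matrix (Fin n) (Fin n) R).submatrix (⇑(Equiv.swap i j)) id

/-- Type II elementary matrix: add `c` times row `j` to row `i`. -/
def IsTypeII {R : Type*} [CommRing R] {n : ℕ} (E : Matrix (Fin n) (Fin n) R) : Prop :=
  ∃ i j : Fin n, i ≠ j ∧ ∃ c : R, E = 1 + Matrix.single i j c

/-- Type III elementary matrix: multiply row `i` by a unit `u`. -/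
def IsTypeIII {R : Type*} [CommRing R] {n : ℕ} (E : Matrix (Fin n) (Fin n) R) : Prop :=
  ∃ i : Fin n, ∃ u : R, IsUnit u ∧
    E = Matrix.diagonal (fun k => if k = i then u else 1)

/-! Elementary matrices have elementary inverses, so their products form a submonoid of the
units that is closed under inverses. Conversely, a unit `A` is reduced to the identity one
column at a time. Once its first `k` columns are those of the identity, Euclid's algorithm,
run with row swaps and transvections among the rows `≥ k`, clears column `k` below the
diagonal. Invertibility then forces the pivot to be a unit, a type III matrix scales it to `1`,
and transvections from row `k` clear the rest of the column. Every matrix used fixes the first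
`k` columns, and these matrices form a submonoid, so the earlier columns are never disturbed. -/

open Matrix

section General

variable {m α : Type*} [Fintype m] [DecidableEq m] [Semiring α]

theorem Matrix.one_submatrix_id_mul (e : m → m) (M : Matrix m m α) :
    (1 : Matrix m m α).submatrix e id * M = M.submatrix e id := by
  simpa using one_submatrix_mul e (Equiv.refl m) M

theorem Matrix.mul_apply_of_col_eq_one {A B : Matrix m m α} {j : m}
    (hB : ∀ i, B i j = (1 : Matrix m m α) i j) (i : m) : (A * B) i j = A i j := by
  simp only [mul_apply, hB]
  rw [← mul_apply, Matrix.mul_one]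

theorem Submonoid.exists_mem_forall_mem_mul_apply_eq_zero (G : Submonoid (Matrix m m α))
    (Q : Matrix m m α → Prop) {p c : m} {T : Finset m} (hpT : p ∉ T)
    (step : ∀ i ∈ T, ∀ A, Q A → ∃ P ∈ G, Q (P * A) ∧ (P * A) i c = 0 ∧
      ∀ r, r ≠ p → r ≠ i → (P * A) r = A r)
    {A : Matrix m m α} (hA : Q A) :
    ∃ P ∈ G, Q (P * A) ∧ ∀ i ∈ T, (P * A) i c = 0 := by
  induction T using Finset.induction_on with
  | empty => exact ⟨1, G.one_mem, by rwa [Matrix.one_mul], by simp⟩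
  | insert i T hiT ih =>
    obtain ⟨P, hP, hQP, hT⟩ := ih (fun h => hpT (Finset.mem_insert_of_mem h))
      (fun j hj => step j (Finset.mem_insert_of_mem hj))
    obtain ⟨P', hP', hQP', hi, hrows⟩ := step i (Finset.mem_insert_self i T) (P * A) hQP
    refine ⟨P' * P, G.mul_mem hP' hP, by rwa [Matrix.mul_assoc], ?_⟩
    rw [Finset.forall_mem_insert, Matrix.mul_assoc]
    refine ⟨hi, fun j hj => ?_⟩
    have hjp : j ≠ p := fun h => hpT (Finset.mem_insert_of_mem (h ▸ hj))
    have hji : j ≠ i := fun h => hiT (h ▸ hj)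
    rw [hrows j hjp hji, hT j hj]

end General

section Elementary

variable {R : Type*} [CommRing R] {n : ℕ}

def IsElementary (E : Matrix (Fin n) (Fin n) R) : Prop :=
  IsTypeI E ∨ IsTypeII E ∨ IsTypeIII E

variable (R n) in
def elementarySubmonoid : Submonoid (Matrix (Fin n) (Fin n) R) :=
  Submonoid.closure {E | IsElementary E}

theorem mem_elementarySubmonoid_iff {A : Matrix (Fin n) (Fin n) R} :
    A ∈ elementarySubmonoid R n ↔
      ∃ L : List (Matrix (Fin n) (Fin n) R), (∀ E ∈ L, IsElementary E) ∧ A = L.prod := by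
  constructor
  · intro hA
    obtain ⟨L, hL, rfl⟩ := Submonoid.exists_list_of_mem_closure hA
    exact ⟨L, hL, rfl⟩
  · rintro ⟨L, hL, rfl⟩
    exact Submonoid.list_prod_mem _ fun E hE => Submonoid.subset_closure (hL E hE)

theorem IsElementary.exists_mul_eq_one {E : Matrix (Fin n) (Fin n) R} (hE : IsElementary E) :
    ∃ E', IsElementary E' ∧ E' * E = 1 := by
  rcases hE with ⟨i, j, rfl⟩ | ⟨i, j, hij, c, rfl⟩ | ⟨i, u, hu, rfl⟩
  · refine ⟨_, .inl ⟨i, j, rfl⟩, ?_⟩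
    ext a b
    simp
  · refine ⟨transvection i j (-c), .inr (.inl ⟨i, j, hij, -c, rfl⟩), ?_⟩
    rw [← transvection, transvection_mul_transvection_same _ _ hij, neg_add_cancel,
      transvection_zero]
  · refine ⟨diagonal fun k => if k = i then ↑hu.unit⁻¹ else 1,
      .inr (.inr ⟨i, _, hu.unit⁻¹.isUnit, rfl⟩), ?_⟩
    rw [diagonal_mul_diagonal, ← diagonal_one]
    congr 1
    funext k
    split_ifs <;> simp

theorem exists_mul_eq_one_of_mem_elementarySubmonoid {P : Matrix (Fin n) (Fin n) R}
    (hP : P ∈ elementarySubmonoid R n) : ∃ Q ∈ elementarySubmonoid R n, Q * P = 1 := by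
  induction hP using Submonoid.closure_induction with
  | mem E hE =>
    obtain ⟨E', hE', h⟩ := IsElementary.exists_mul_eq_one hE
    exact ⟨E', Submonoid.subset_closure hE', h⟩
  | one => exact ⟨1, Submonoid.one_mem _, Matrix.mul_one 1⟩
  | mul P₁ P₂ _ _ h₁ h₂ =>
    obtain ⟨Q₁, hQ₁, h₁⟩ := h₁
    obtain ⟨Q₂, hQ₂, h₂⟩ := h₂
    refine ⟨Q₂ * Q₁, Submonoid.mul_mem _ hQ₂ hQ₁, ?_⟩
    rw [Matrix.mul_assoc, ← Matrix.mul_assoc Q₁, h₁, Matrix.one_mul, h₂]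

theorem isUnit_of_mem_elementarySubmonoid {P : Matrix (Fin n) (Fin n) R}
    (hP : P ∈ elementarySubmonoid R n) : IsUnit P := by
  obtain ⟨Q, -, hQP⟩ := exists_mul_eq_one_of_mem_elementarySubmonoid hP
  exact (isUnit_iff_isUnit_det P).2 (isUnit_det_of_left_inverse hQP)

end Elementary

section FixingFirstColumns

variable {R : Type*} {n : ℕ}

variable (R n) in
def fixingFirstColumns [Semiring R] (k : ℕ) : Submonoid (Matrix (Fin n) (Fin n) R) where
  carrier := {A | ∀ i j : Fin n, (j : ℕ) < k → A i j = (1 : Matrix (Fin n) (Fin n) R) i j}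
  one_mem' _ _ _ := rfl
  mul_mem' {A B} hA hB i j hj := by
    rw [mul_apply_of_col_eq_one fun i => hB i j hj, hA i j hj]

theorem eq_one_of_mem_fixingFirstColumns [Semiring R] {A : Matrix (Fin n) (Fin n) R}
    (hA : A ∈ fixingFirstColumns R n n) : A = 1 :=
  Matrix.ext fun i j => hA i j j.isLt

theorem mem_fixingFirstColumns_succ [Semiring R] {A : Matrix (Fin n) (Fin n) R} {k : Fin n}
    (hA : A ∈ fixingFirstColumns R n k) (hk : ∀ i, A i k = (1 : Matrix (Fin n) (Fin n) R) i k) :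
    A ∈ fixingFirstColumns R n (k + 1) := by
  intro i j hj
  rcases Nat.lt_succ_iff_lt_or_eq.1 hj with hj | hj
  · exact hA i j hj
  · rw [Fin.ext hj, hk]

variable [CommRing R]

theorem isUnit_apply_self_of_mem_fixingFirstColumns {A : Matrix (Fin n) (Fin n) R}
    (hA : IsUnit A) {k : Fin n} (hAk : A ∈ fixingFirstColumns R n k)
    (hbelow : ∀ i, k < i → A i k = 0) : IsUnit (A k k) := by
  -- Row `k` of a left inverse `B` vanishes on the first `k` columns, so `(B * A) k k` is
  -- `B k k * A k k`.
  obtain ⟨B, hBA⟩ := hA.exists_left_inv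
  have hBk : ∀ j : Fin n, j < k → B k j = 0 := fun j hj => by
    rw [← mul_apply_of_col_eq_one (A := B) (fun i => hAk i j hj) k, hBA, one_apply_ne hj.ne']
  have h : B k k * A k k = 1 := by
    rw [← one_apply_eq k, ← hBA, mul_apply, Finset.sum_eq_single k]
    · intro j _ hjk
      rcases hjk.lt_or_gt with hj | hj
      · rw [hBk j hj, zero_mul]
      · rw [hbelow j hj, mul_zero]
    · simp
  exact IsUnit.of_mul_eq_one_right _ h

theorem swap_mem_fixingFirstColumns {k : ℕ} {p i : Fin n} (hp : k ≤ p) (hi : k ≤ i) :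
    (1 : Matrix (Fin n) (Fin n) R).submatrix (Equiv.swap p i) id ∈ fixingFirstColumns R n k := by
  intro r j hj
  have hjp : j ≠ p := Fin.ne_of_lt (by omega)
  have hji : j ≠ i := Fin.ne_of_lt (by omega)
  simp [one_apply, Equiv.swap_apply_eq_iff, Equiv.swap_apply_of_ne_of_ne hjp hji]

theorem transvection_mem_fixingFirstColumns {k : ℕ} {p i : Fin n} (hi : k ≤ i) (c : R) :
    transvection p i c ∈ fixingFirstColumns R n k := by
  intro r j hj
  rw [transvection, Matrix.add_apply, single_apply_of_col_ne _ _ (Fin.ne_of_gt (by omega)),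
    add_zero]

theorem diagonal_mem_fixingFirstColumns {k : ℕ} {i : Fin n} (hi : k ≤ i) (u : R) :
    diagonal (fun j => if j = i then u else 1) ∈ fixingFirstColumns R n k := by
  intro r j hj
  have hji : j ≠ i := Fin.ne_of_lt (by omega)
  by_cases hrj : r = j
  · subst hrj
    simp [hji]
  · simp [hrj]

theorem mem_inf_of_isElementary {k : ℕ} {E : Matrix (Fin n) (Fin n) R} (hE : IsElementary E)
    (hEk : E ∈ fixingFirstColumns R n k) :
    E ∈ elementarySubmonoid R n ⊓ fixingFirstColumns R n k :=
  ⟨Submonoid.subset_closure hE, hEk⟩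

theorem exists_mem_inf_mul_apply_self_eq_one {k : Fin n} {A : Matrix (Fin n) (Fin n) R}
    (hA : IsUnit (A k k)) :
    ∃ D ∈ elementarySubmonoid R n ⊓ fixingFirstColumns R n k, (D * A) k k = 1 := by
  refine ⟨diagonal fun j => if j = k then ↑hA.unit⁻¹ else 1,
    mem_inf_of_isElementary (.inr (.inr ⟨k, _, hA.unit⁻¹.isUnit, rfl⟩))
      (diagonal_mem_fixingFirstColumns le_rfl _), ?_⟩
  rw [diagonal_mul, if_pos rfl]
  exact hA.val_inv_mul

theorem exists_mem_inf_forall_mul_apply_eq_one_apply {k : Fin n} {A : Matrix (Fin n) (Fin n) R}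
    (hA : A k k = 1) :
    ∃ P ∈ elementarySubmonoid R n ⊓ fixingFirstColumns R n k,
      ∀ i, (P * A) i k = (1 : Matrix (Fin n) (Fin n) R) i k := by
  obtain ⟨P, hP, hPk, hP0⟩ := Submonoid.exists_mem_forall_mem_mul_apply_eq_zero
    (elementarySubmonoid R n ⊓ fixingFirstColumns R n k) (fun C => C k k = 1)
    (p := k) (c := k) (T := Finset.univ.erase k) (by simp)
    (fun i hi C hC => by
      have hik : i ≠ k := Finset.ne_of_mem_erase hi
      refine ⟨transvection i k (-C i k),
        mem_inf_of_isElementary (.inr (.inl ⟨i, k, hik, _, rfl⟩))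
          (transvection_mem_fixingFirstColumns le_rfl _), ?_, ?_,
        fun r _ hri => funext fun j => transvection_mul_apply_of_ne i k r j hri _ C⟩
      · rw [transvection_mul_apply_of_ne i k k k hik.symm]
        exact hC
      · rw [transvection_mul_apply_same, hC]
        ring) hA
  refine ⟨P, hP, fun i => ?_⟩
  by_cases hik : i = k
  · rw [hik, hPk, one_apply_eq]
  · rw [hP0 i (Finset.mem_erase.2 ⟨hik, Finset.mem_univ i⟩), one_apply_ne hik]

end FixingFirstColumns

section EuclideanDomain

variable {R : Type*} [EuclideanDomain R] {n : ℕ}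

theorem Submonoid.exists_mem_mul_apply_eq_zero_of_swap_mem_of_transvection_mem
    (G : Submonoid (Matrix (Fin n) (Fin n) R)) {p i : Fin n}
    (hswap : (1 : Matrix (Fin n) (Fin n) R).submatrix (Equiv.swap p i) id ∈ G)
    (htrans : ∀ c, transvection p i c ∈ G) (c : Fin n) (A : Matrix (Fin n) (Fin n) R) :
    ∃ P ∈ G, (P * A) i c = 0 ∧ ∀ r, r ≠ p → r ≠ i → (P * A) r = A r := by
  suffices ∀ b, ∀ A : Matrix (Fin n) (Fin n) R, A i c = b →
      ∃ P ∈ G, (P * A) i c = 0 ∧ ∀ r, r ≠ p → r ≠ i → (P * A) r = A r from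
    this _ A rfl
  intro b
  induction b using IsWellFounded.induction (EuclideanDomain.r : R → R → Prop) with | _ b ih
  intro A hb
  by_cases hb0 : b = 0
  · exact ⟨1, G.one_mem, by rw [Matrix.one_mul, hb, hb0], fun r _ _ => by rw [Matrix.one_mul]⟩
  -- One step of Euclid's algorithm: `(A p c, b)` becomes `(b, A p c % b)`.
  set E := (1 : Matrix (Fin n) (Fin n) R).submatrix (Equiv.swap p i) id *
    transvection p i (-(A p c / b))
  have hE : E ∈ G := G.mul_mem hswap (htrans _)
  have hEA : ∀ r, (E * A) r = (transvection p i (-(A p c / b)) * A) (Equiv.swap p i r) := by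
    intro r
    rw [Matrix.mul_assoc, one_submatrix_id_mul]
    rfl
  have hEAi : (E * A) i c = A p c % b := by
    rw [hEA, Equiv.swap_apply_right, transvection_mul_apply_same, hb,
      EuclideanDomain.mod_eq_sub_mul_div]
    ring
  obtain ⟨P, hP, hPi, hProws⟩ := ih _ (EuclideanDomain.mod_lt _ hb0) (E * A) hEAi
  refine ⟨P * E, G.mul_mem hP hE, by rwa [Matrix.mul_assoc], fun r hrp hri => ?_⟩
  funext j
  rw [Matrix.mul_assoc, hProws r hrp hri, hEA, Equiv.swap_apply_of_ne_of_ne hrp hri]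
  exact transvection_mul_apply_of_ne p i r j hrp _ A

theorem exists_mem_inf_forall_lt_mul_apply_eq_zero (k : Fin n) (A : Matrix (Fin n) (Fin n) R) :
    ∃ P ∈ elementarySubmonoid R n ⊓ fixingFirstColumns R n k,
      ∀ i, k < i → (P * A) i k = 0 := by
  obtain ⟨P, hP, -, hP0⟩ := Submonoid.exists_mem_forall_mem_mul_apply_eq_zero
    (elementarySubmonoid R n ⊓ fixingFirstColumns R n k) (fun _ => True)
    (p := k) (c := k) (T := Finset.univ.filter (k < ·)) (by simp) (fun i hi B _ => by
      have hki : k < i := (Finset.mem_filter.1 hi).2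
      obtain ⟨P, hP, hPi, hProws⟩ :=
        Submonoid.exists_mem_mul_apply_eq_zero_of_swap_mem_of_transvection_mem _
          (mem_inf_of_isElementary (.inl ⟨k, i, rfl⟩)
            (swap_mem_fixingFirstColumns le_rfl hki.le))
          (fun c => mem_inf_of_isElementary (.inr (.inl ⟨k, i, hki.ne, c, rfl⟩))
            (transvection_mem_fixingFirstColumns hki.le c)) k B
      exact ⟨P, hP, trivial, hPi, hProws⟩) trivial
  exact ⟨P, hP, fun i hi => hP0 i (by simpa using hi)⟩

theorem exists_mem_elementarySubmonoid_mul_mem_fixingFirstColumns_succ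
    {A : Matrix (Fin n) (Fin n) R} (hA : IsUnit A) {k : Fin n}
    (hAk : A ∈ fixingFirstColumns R n k) :
    ∃ P ∈ elementarySubmonoid R n, P * A ∈ fixingFirstColumns R n (k + 1) := by
  obtain ⟨P₁, hP₁, hbelow⟩ := exists_mem_inf_forall_lt_mul_apply_eq_zero k A
  have hB : P₁ * A ∈ fixingFirstColumns R n k := Submonoid.mul_mem _ hP₁.2 hAk
  have hunit : IsUnit ((P₁ * A) k k) := isUnit_apply_self_of_mem_fixingFirstColumns
    ((isUnit_of_mem_elementarySubmonoid hP₁.1).mul hA) hB hbelow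
  obtain ⟨D, hD, hDB⟩ := exists_mem_inf_mul_apply_self_eq_one hunit
  obtain ⟨P₂, hP₂, hcol⟩ := exists_mem_inf_forall_mul_apply_eq_one_apply hDB
  refine ⟨P₂ * D * P₁, Submonoid.mul_mem _ (Submonoid.mul_mem _ hP₂.1 hD.1) hP₁.1, ?_⟩
  rw [Matrix.mul_assoc, Matrix.mul_assoc]
  exact mem_fixingFirstColumns_succ (Submonoid.mul_mem _ hP₂.2 (Submonoid.mul_mem _ hD.2 hB)) hcol

theorem exists_mem_elementarySubmonoid_mul_mem_fixingFirstColumns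
    {A : Matrix (Fin n) (Fin n) R} (hA : IsUnit A) :
    ∀ k ≤ n, ∃ P ∈ elementarySubmonoid R n, P * A ∈ fixingFirstColumns R n k
  | 0, _ => ⟨1, Submonoid.one_mem _, fun _ _ hj => absurd hj (Nat.not_lt_zero _)⟩
  | k + 1, hk => by
    obtain ⟨P, hP, hPA⟩ :=
      exists_mem_elementarySubmonoid_mul_mem_fixingFirstColumns hA k (by omega)
    obtain ⟨Q, hQ, hQPA⟩ := exists_mem_elementarySubmonoid_mul_mem_fixingFirstColumns_succ
      ((isUnit_of_mem_elementarySubmonoid hP).mul hA) (k := ⟨k, hk⟩) hPA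
    exact ⟨Q * P, Submonoid.mul_mem _ hQ hP, by rwa [Matrix.mul_assoc]⟩

theorem mem_elementarySubmonoid_of_isUnit {A : Matrix (Fin n) (Fin n) R} (hA : IsUnit A) :
    A ∈ elementarySubmonoid R n := by
  obtain ⟨P, hP, hPA⟩ := exists_mem_elementarySubmonoid_mul_mem_fixingFirstColumns hA n le_rfl
  obtain ⟨Q, hQ, hQP⟩ := exists_mul_eq_one_of_mem_elementarySubmonoid hP
  have hA_eq : A = Q := by
    rw [← Matrix.one_mul A, ← hQP, Matrix.mul_assoc, eq_one_of_mem_fixingFirstColumns hPA,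
      Matrix.mul_one]
  exact hA_eq ▸ hQ

end EuclideanDomain

/-- A square matrix over a Euclidean domain is a unit in the matrix ring iff it is
a product of elementary matrices of types I, II and III. -/
theorem stmt16 {R : Type*} [EuclideanDomain R] {n : ℕ}
    (A : Matrix (Fin n) (Fin n) R) :
    IsUnit A ↔ ∃ L : List (Matrix (Fin n) (Fin n) R),
      (∀ E ∈ L, IsTypeI E ∨ IsTypeII E ∨ IsTypeIII E) ∧ A = L.prod :=
  ⟨fun hA => mem_elementarySubmonoid_iff.1 (mem_elementarySubmonoid_of_isUnit hA),
    fun hL => isUnit_of_mem_elementarySubmonoid (mem_elementarySubmonoid_iff.2 hL)⟩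
end

section
/- Let A and B be m×n matrices over a Euclidean domain that are equivalent (A = PBQ with P, Q invertible). Then for each k with 1 ≤ k ≤ rank(A), the k-th determinantal divisors of A and B are associates: gcd of all k×k minors of A equals a unit times gcd of all k×k minors of B. -/
/-- The determinantal rank of a matrix. -/
noncomputable def detRank {R : Type*} [CommRing R] {a b : ℕ}
    (A : Matrix (Fin a) (Fin b) R) : ℕ :=
  sSup {k | ∃ f : Fin k → Fin a, ∃ g : Fin k → Fin b,
    StrictMono f ∧ StrictMono g ∧ (A.submatrix f g).det ≠ 0}

open Matrix

lemma exists_strictMono_comp {m k : ℕ} (f : Fin k → Fin m) (hf : Function.Injective f) :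
    ∃ (f' : Fin k → Fin m) (σ : Equiv.Perm (Fin k)), StrictMono f' ∧ f = f' ∘ σ := by
  classical
  set s : Finset (Fin m) := Finset.univ.image f with hs
  have hcard : s.card = k := by
    rw [hs, Finset.card_image_of_injective _ hf, Finset.card_univ, Fintype.card_fin]
  have hmem : ∀ i, f i ∈ s := fun i => by simp [hs]
  set t : Fin k → Fin k := fun i => (s.orderIsoOfFin hcard).symm ⟨f i, hmem i⟩ with ht
  have htinj : Function.Injective t := by
    intro a b hab
    apply hf
    have := congrArg (s.orderIsoOfFin hcard) hab
    simpa [ht] using congrArg Subtype.val this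
  have htbij : Function.Bijective t := Finite.injective_iff_bijective.mp htinj
  refine ⟨s.orderEmbOfFin hcard, Equiv.ofBijective t htbij,
    (s.orderEmbOfFin hcard).strictMono, ?_⟩
  funext i
  simp only [Function.comp_apply, Equiv.ofBijective_apply, ht]
  rw [← Finset.coe_orderIsoOfFin_apply]
  simp

/-- d divides all strictly-monotone minors implies d divides all minors. -/
lemma dvd_det_submatrix_of_strictMono {R : Type*} [CommRing R] {m n k : ℕ} (d : R)
    (B : Matrix (Fin m) (Fin n) R)
    (h : ∀ (f : Fin k → Fin m) (g : Fin k → Fin n), StrictMono f → StrictMono g →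
      d ∣ (B.submatrix f g).det) :
    ∀ (f : Fin k → Fin m) (g : Fin k → Fin n), d ∣ (B.submatrix f g).det := by
  intro f g
  by_cases hf : Function.Injective f
  · by_cases hg : Function.Injective g
    · obtain ⟨f', σ, hf', hfe⟩ := exists_strictMono_comp f hf
      obtain ⟨g', τ, hg', hge⟩ := exists_strictMono_comp g hg
      have key : B.submatrix f g = ((B.submatrix f' g').submatrix σ id).submatrix id τ := by
        subst hfe hge; ext i j; simp [Matrix.submatrix]
      rw [key, Matrix.det_permute', Matrix.det_permute]
      exact (Dvd.dvd.mul_left (h f' g' hf' hg') _).mul_left _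
    · obtain ⟨a, b, hab, hne⟩ : ∃ a b, g a = g b ∧ a ≠ b := by
        simp only [Function.Injective, not_forall] at hg
        obtain ⟨a, b, h1, h2⟩ := hg; exact ⟨a, b, h1, h2⟩
      have : (B.submatrix f g).det = 0 :=
        Matrix.det_zero_of_column_eq hne (fun l => by simp [hab])
      simp [this]
  · obtain ⟨a, b, hab, hne⟩ : ∃ a b, f a = f b ∧ a ≠ b := by
      simp only [Function.Injective, not_forall] at hf
      obtain ⟨a, b, h1, h2⟩ := hf; exact ⟨a, b, h1, h2⟩
    have : (B.submatrix f g).det = 0 :=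
      Matrix.det_zero_of_row_eq hne (by funext l; simp [hab])
    simp [this]

/-- Left multiplication: minors of M*B are combinations of minors of B. -/
lemma dvd_det_submatrix_mul_left {R : Type*} [CommRing R] {m n p k : ℕ} (d : R)
    (M : Matrix (Fin m) (Fin p) R) (B : Matrix (Fin p) (Fin n) R)
    (h : ∀ (f : Fin k → Fin p) (g : Fin k → Fin n), d ∣ (B.submatrix f g).det) :
    ∀ (f : Fin k → Fin m) (g : Fin k → Fin n), d ∣ ((M * B).submatrix f g).det := by
  intro f g
  classical
  have expand : ((M * B).submatrix f g).det
      = ∑ r : Fin k → Fin p, (∏ i, M (f i) (r i)) * (B.submatrix r g).det := by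
    have h1 : ((M * B).submatrix f g) =
        Matrix.of (fun i => ∑ l : Fin p, M (f i) l • (fun j => B l (g j))) := by
      ext i j
      simp [Matrix.mul_apply, Finset.sum_apply]
    rw [h1]
    rw [show ((Matrix.of fun i => ∑ l : Fin p, M (f i) l • fun j => B l (g j)) :
        Matrix (Fin k) (Fin k) R).det
        = (Matrix.detRowAlternating : (Fin k → R) [⋀^Fin k]→ₗ[R] R).toMultilinearMap
          (fun i => ∑ l : Fin p, M (f i) l • fun j => B l (g j)) from rfl]
    rw [(Matrix.detRowAlternating : (Fin k → R) [⋀^Fin k]→ₗ[R] R).toMultilinearMap.map_sum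
      (g := fun i l => M (f i) l • fun j => B l (g j))]
    refine Finset.sum_congr rfl fun r _ => ?_
    rw [(Matrix.detRowAlternating : (Fin k → R) [⋀^Fin k]→ₗ[R] R).toMultilinearMap.map_smul_univ
      (fun i => M (f i) (r i)) (fun i => fun j => B (r i) (g j))]
    rw [smul_eq_mul]
    congr 1
  rw [expand]
  exact Finset.dvd_sum fun r _ => (h r g).mul_left _

/-- Right multiplication version, via transpose. -/
lemma dvd_det_submatrix_mul_right {R : Type*} [CommRing R] {m n p k : ℕ} (d : R)
    (B : Matrix (Fin m) (Fin p) R) (Q : Matrix (Fin p) (Fin n) R)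
    (h : ∀ (f : Fin k → Fin m) (g : Fin k → Fin p), d ∣ (B.submatrix f g).det) :
    ∀ (f : Fin k → Fin m) (g : Fin k → Fin n), d ∣ ((B * Q).submatrix f g).det := by
  intro f g
  have ht : ∀ (a : Fin k → Fin p) (b : Fin k → Fin m), d ∣ (Bᵀ.submatrix a b).det := by
    intro a b
    rw [show Bᵀ.submatrix a b = (B.submatrix b a)ᵀ from rfl, Matrix.det_transpose]
    exact h b a
  have := dvd_det_submatrix_mul_left d Qᵀ Bᵀ ht g f
  rwa [← Matrix.transpose_mul, show (B * Q)ᵀ.submatrix g f = ((B * Q).submatrix f g)ᵀ from rfl,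
    Matrix.det_transpose] at this

lemma dvd_transfer {R : Type*} [CommRing R] {m n k : ℕ} (d : R)
    (Y : Matrix (Fin m) (Fin n) R) (P' : Matrix (Fin m) (Fin m) R)
    (Q' : Matrix (Fin n) (Fin n) R)
    (h : ∀ (f : Fin k → Fin m) (g : Fin k → Fin n), StrictMono f → StrictMono g →
      d ∣ (Y.submatrix f g).det) :
    ∀ (f : Fin k → Fin m) (g : Fin k → Fin n), d ∣ ((P' * Y * Q').submatrix f g).det := by
  have h0 := dvd_det_submatrix_of_strictMono d Y h
  have h1 := dvd_det_submatrix_mul_left d P' Y h0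
  exact dvd_det_submatrix_mul_right d (P' * Y) Q' h1

/-- Equivalent matrices over a Euclidean domain have associate `k`-th determinantal
divisors: if `dA` is a gcd of all `k×k` minors of `A` and `dB` a gcd of all `k×k`
minors of `B`, and `A = PBQ` with `P, Q` units, then `dA` and `dB` are associates. -/
theorem stmt18 {R : Type*} [EuclideanDomain R] {m n : ℕ}
    (A B : Matrix (Fin m) (Fin n) R)
    (P : Matrix (Fin m) (Fin m) R) (Q : Matrix (Fin n) (Fin n) R)
    (hP : IsUnit P) (hQ : IsUnit Q) (hAB : A = P * B * Q)
    {k : ℕ} (hk : 1 ≤ k) (hkr : k ≤ detRank A)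
    (dA dB : R)
    (hdA₁ : ∀ (f : Fin k → Fin m) (g : Fin k → Fin n), StrictMono f → StrictMono g →
        dA ∣ (A.submatrix f g).det)
    (hdA₂ : ∀ c : R, (∀ (f : Fin k → Fin m) (g : Fin k → Fin n),
        StrictMono f → StrictMono g → c ∣ (A.submatrix f g).det) → c ∣ dA)
    (hdB₁ : ∀ (f : Fin k → Fin m) (g : Fin k → Fin n), StrictMono f → StrictMono g →
        dB ∣ (B.submatrix f g).det)
    (hdB₂ : ∀ c : R, (∀ (f : Fin k → Fin m) (g : Fin k → Fin n),
        StrictMono f → StrictMono g → c ∣ (B.submatrix f g).det) → c ∣ dB) :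
    Associated dA dB := by
  have hBA : B = (↑hP.unit⁻¹ : Matrix (Fin m) (Fin m) R) * A * (↑hQ.unit⁻¹ : Matrix (Fin n) (Fin n) R) := by
    have key : (↑hP.unit⁻¹ : Matrix (Fin m) (Fin m) R)
        * ((↑hP.unit : Matrix (Fin m) (Fin m) R) * B * (↑hQ.unit : Matrix (Fin n) (Fin n) R))
        * (↑hQ.unit⁻¹ : Matrix (Fin n) (Fin n) R) = B := by
      rw [Matrix.mul_assoc ((hP.unit : Matrix (Fin m) (Fin m) R)) B,
        ← Matrix.mul_assoc (↑hP.unit⁻¹ : Matrix (Fin m) (Fin m) R),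
        Units.inv_mul, Matrix.one_mul, Matrix.mul_assoc B, Units.mul_inv, Matrix.mul_one]
    conv_lhs => rw [← key]
    rw [hP.unit_spec, hQ.unit_spec, ← hAB]
  have h1 : dB ∣ dA := by
    apply hdA₂
    intro f g hf hg
    rw [hAB]
    exact dvd_transfer dB B P Q hdB₁ f g
  have h2 : dA ∣ dB := by
    apply hdB₂
    intro f g hf hg
    rw [hBA]
    exact dvd_transfer dA A _ _ hdA₁ f g
  exact associated_of_dvd_dvd h2 h1
end

section
/- Let A and B be n×n matrices over a field F. Then the characteristic matrices xI - A and xI - B are equivalent over the polynomial ring F[x] (i.e., P(xI-A)Q = xI-B for some invertible P, Q over F[x]) if and only if A and B are similar over F (i.e., A = S^{-1}BS for some invertible S over F). -/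
/-!
Over any ring `R`, let `p (X - a) q = X - b` with `p, q` units of `R[X]`. Divide `p` by the monic
`X - b` and `p⁻¹` by `X - a`: `p = t + (X - b) u`, `p⁻¹ = s + (X - a) v` with
`t, s ∈ R`. Since `p (X - a) = (X - b) q⁻¹`, comparing degrees gives `t a = b t`, and likewise
`s b = a s`; comparing constant remainders in `p p⁻¹ = 1 = p⁻¹ p` gives `t s = 1 = s t`.
Hence `a` and `b` are conjugate. For `R = Mₙ(F)` this applies to the characteristic matrices
through the isomorphism `Mₙ(F[X]) ≃ Mₙ(F)[X]`.
-/

open Polynomial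

namespace Polynomial

variable {R : Type*} [Ring R]

theorem natDegree_eq_zero_of_X_sub_C_mul_eq_linear [Nontrivial R] {b t c : R} {w : R[X]}
    (h : (X - C b) * w = C t * X + C c) : w.natDegree = 0 := by
  rcases eq_or_ne w 0 with rfl | hw
  · rfl
  have := natDegree_linear_le (a := t) (b := c)
  rw [← h, (monic_X_sub_C b).natDegree_mul' hw, natDegree_X_sub_C] at this
  omega

theorem eq_C_of_X_sub_C_mul_eq_linear [Nontrivial R] {b t c : R} {w : R[X]}
    (h : (X - C b) * w = C t * X + C c) : w = C t ∧ c = -(b * t) := by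
  obtain ⟨w₀, rfl⟩ : ∃ w₀, w = C w₀ :=
    ⟨_, eq_C_of_natDegree_eq_zero (natDegree_eq_zero_of_X_sub_C_mul_eq_linear h)⟩
  have h1 : w₀ = t := by simpa [sub_mul, X_mul] using congr_arg (coeff · 1) h
  have h0 : -(b * w₀) = c := by simpa [sub_mul, X_mul, coeff_C] using congr_arg (coeff · 0) h
  exact ⟨h1 ▸ rfl, h1 ▸ h0.symm⟩

theorem exists_eq_C_add_X_sub_C_mul [Nontrivial R] (p : R[X]) (b : R) :
    ∃ t u, p = C t + (X - C b) * u := by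
  have hdeg : (p %ₘ (X - C b)).degree ≤ 0 := by
    have := degree_modByMonic_lt p (monic_X_sub_C b)
    rwa [degree_X_sub_C, Nat.WithBot.lt_one_iff_le_zero] at this
  refine ⟨(p %ₘ (X - C b)).coeff 0, p /ₘ (X - C b), ?_⟩
  rw [← eq_C_of_degree_le_zero hdeg, modByMonic_add_div]

theorem C_mul_X_sub_C_of_semiconjBy {t a b : R} (h : SemiconjBy t a b) :
    C t * (X - C a) = (X - C b) * C t := by
  rw [mul_sub, sub_mul, ← C_mul, ← C_mul, h.eq, X_mul_C]

theorem semiconjBy_of_mul_X_sub_C_eq [Nontrivial R] {a b t : R} {p u r : R[X]}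
    (hp : p = C t + (X - C b) * u) (h : p * (X - C a) = (X - C b) * r) :
    SemiconjBy t a b := by
  have key : (X - C b) * (r - u * (X - C a)) = C t * X + C (-(t * a)) := by
    rw [mul_sub, ← h, hp, C_neg, C_mul]; noncomm_ring
  exact neg_inj.1 (eq_C_of_X_sub_C_mul_eq_linear key).2

theorem mul_eq_one_of_remainders [Nontrivial R] {a b t s : R} {p p' u v : R[X]}
    (ht : SemiconjBy t a b) (hp : p = C t + (X - C b) * u) (hp' : p' = C s + (X - C a) * v)
    (h : p * p' = 1) : t * s = 1 := by
  have key : (X - C b) * (C t * v + u * p') = C 0 * X + C (1 - t * s) := by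
    calc (X - C b) * (C t * v + u * p') = (X - C b) * C t * v + (X - C b) * u * p' := by
          noncomm_ring
      _ = C t * p' - C (t * s) + (X - C b) * u * p' := by
          rw [← C_mul_X_sub_C_of_semiconjBy ht, hp', C_mul]; noncomm_ring
      _ = p * p' - C (t * s) := by rw [hp]; noncomm_ring
      _ = C 0 * X + C (1 - t * s) := by rw [h]; simp
  have := (eq_C_of_X_sub_C_mul_eq_linear key).2
  rw [mul_zero, neg_zero, sub_eq_zero] at this
  exact this.symm

theorem IsConj.of_isUnit_mul_X_sub_C_mul_eq {a b : R} {p q : R[X]} (hp : IsUnit p) (hq : IsUnit q)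
    (h : p * (X - C a) * q = X - C b) : IsConj a b := by
  rcases subsingleton_or_nontrivial R with hR | hR
  · exact Subsingleton.elim a b ▸ IsConj.refl a
  obtain ⟨p, rfl⟩ := hp
  obtain ⟨q, rfl⟩ := hq
  obtain ⟨t, u, hpt⟩ := exists_eq_C_add_X_sub_C_mul (p : R[X]) b
  obtain ⟨s, v, hps⟩ := exists_eq_C_add_X_sub_C_mul (↑p⁻¹ : R[X]) a
  have hta : SemiconjBy t a b := semiconjBy_of_mul_X_sub_C_eq hpt (r := ↑q⁻¹) (by
    rw [← h, Units.mul_inv_cancel_right])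
  have hsb : SemiconjBy s b a := semiconjBy_of_mul_X_sub_C_eq hps (r := q) (by
    rw [← h, ← mul_assoc, ← mul_assoc, Units.inv_mul, one_mul])
  exact ⟨⟨t, s, mul_eq_one_of_remainders hta hpt hps p.mul_inv,
    mul_eq_one_of_remainders hsb hps hpt p.inv_mul⟩, hta⟩

theorem IsConj.exists_isUnit_mul_X_sub_C_mul_eq {a b : R} (h : IsConj a b) :
    ∃ p q : R[X], IsUnit p ∧ IsUnit q ∧ p * (X - C a) * q = X - C b := by
  obtain ⟨c, hc⟩ := h
  refine ⟨C ↑c, C ↑c⁻¹, c.isUnit.map C, c⁻¹.isUnit.map C, ?_⟩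
  rw [C_mul_X_sub_C_of_semiconjBy hc, mul_assoc, ← C_mul, Units.mul_inv, C_1, mul_one]

theorem isConj_iff_exists_isUnit_mul_X_sub_C_mul_eq {a b : R} :
    IsConj a b ↔ ∃ p q : R[X], IsUnit p ∧ IsUnit q ∧ p * (X - C a) * q = X - C b :=
  ⟨IsConj.exists_isUnit_mul_X_sub_C_mul_eq, fun ⟨_, _, hp, hq, h⟩ =>
    IsConj.of_isUnit_mul_X_sub_C_mul_eq hp hq h⟩

end Polynomial

theorem isConj_iff_exists_mul_eq_one {M : Type*} [Monoid M] {a b : M} :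
    IsConj a b ↔ ∃ s t : M, s * t = 1 ∧ t * s = 1 ∧ a = t * b * s := by
  constructor
  · rintro ⟨c, hc⟩
    refine ⟨c, ↑c⁻¹, c.mul_inv, c.inv_mul, ?_⟩
    rw [mul_assoc, ← hc.eq, ← mul_assoc, Units.inv_mul, one_mul]
  · rintro ⟨s, t, hst, hts, rfl⟩
    exact ⟨⟨s, t, hst, hts⟩, by simp [SemiconjBy, ← mul_assoc, hst]⟩

theorem MulEquivClass.exists_isUnit_mul_mul_eq_iff {E M N : Type*} [Monoid M] [Monoid N]
    [EquivLike E M N] [MulEquivClass E M N] (e : E) (x y : M) :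
    (∃ p q : M, IsUnit p ∧ IsUnit q ∧ p * x * q = y) ↔
      ∃ p q : N, IsUnit p ∧ IsUnit q ∧ p * e x * q = e y := by
  constructor
  · rintro ⟨p, q, hp, hq, h⟩
    exact ⟨e p, e q, hp.map e, hq.map e, by rw [← map_mul, ← map_mul, h]⟩
  · rintro ⟨p, q, hp, hq, h⟩
    obtain ⟨p, rfl⟩ := EquivLike.surjective e p
    obtain ⟨q, rfl⟩ := EquivLike.surjective e q
    exact ⟨p, q, (MulEquiv.isUnit_map e).1 hp, (MulEquiv.isUnit_map e).1 hq,
      EquivLike.injective e (by rw [map_mul, map_mul, h])⟩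

/-- The characteristic matrices `xI - A` and `xI - B` are equivalent over `F[x]`
iff `A` and `B` are similar over `F`. -/
theorem stmt19 {F : Type*} [Field F] {n : ℕ}
    (A B : Matrix (Fin n) (Fin n) F) :
    (∃ P Q : Matrix (Fin n) (Fin n) (Polynomial F),
        IsUnit P ∧ IsUnit Q ∧ P * Matrix.charmatrix A * Q = Matrix.charmatrix B)
      ↔ ∃ S T : Matrix (Fin n) (Fin n) F, S * T = 1 ∧ T * S = 1 ∧ A = T * B * S := by
  rw [MulEquivClass.exists_isUnit_mul_mul_eq_iff matPolyEquiv, Matrix.matPolyEquiv_charmatrix,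
    Matrix.matPolyEquiv_charmatrix, ← isConj_iff_exists_isUnit_mul_X_sub_C_mul_eq,
    isConj_iff_exists_mul_eq_one]
end
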